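/- arXiv:2208.01926 — 12 statements merged into one kernel-verified Lean document; each statement's English description precedes it below -/
import Mathlib

section
/- Let Γ be a locally finite simple graph, F a field, λ ∈ F and v a vertex of Γ. Then the following are equivalent: (i) there exists an eigenfunction of A_{Γ,F} corresponding to λ whose support is finite and contains v; (ii) there exists no (F,λ)-propagator of Γ with respect to v. -/
open Function

/-- The adjacency operator of a locally finite simple graph over a field `F`:
`(adjOp G f) w = ∑_{u ∈ Γ(w)} f u`. -/
def adjOp {V F : Type*} (G : SimpleGraph V) [G.LocallyFinite] [Field F]
    (f : V → F) (w : V) : F :=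
  ∑ u ∈ G.neighborFinset w, f u

/-- An eigenfunction of the adjacency operator corresponding to `l`. -/
def IsEigenfun {V F : Type*} (G : SimpleGraph V) [G.LocallyFinite] [Field F]
    (l : F) (f : V → F) : Prop :=
  f ≠ 0 ∧ ∀ w, adjOp G f w = l * f w

/-- An `(F, l)`-propagator of `G` with respect to the vertex `v`. -/
def IsPropagator {V F : Type*} [DecidableEq V] (G : SimpleGraph V) [G.LocallyFinite] [Field F]
    (l : F) (v : V) (f : V → F) : Prop :=
  ∀ w, adjOp G f w - l * f w = if w = v then 1 else 0

section Aux

variable {V F : Type*} [DecidableEq V] (G : SimpleGraph V) [G.LocallyFinite] [Field F] (l : F)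

/-- The "discrete Green's identity" / pairing lemma. -/
lemma pair_lemma (f g : V → F) (s : Finset V) (hs : support f ⊆ s) :
    ∑ w ∈ s, f w * (adjOp G g w - l * g w)
      = ∑ u ∈ s ∪ s.biUnion (fun w => G.neighborFinset w), (adjOp G f u - l * f u) * g u := by
  classical
  set t := s ∪ s.biUnion (fun w => G.neighborFinset w) with ht
  have hst : s ⊆ t := Finset.subset_union_left
  have hvanish : ∀ x, x ∉ s → f x = 0 := by
    intro x hx
    by_contra h
    exact hx (hs h)
  have hfilt : ∀ w ∈ s, t.filter (fun u => G.Adj w u) = G.neighborFinset w := by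
    intro w hw
    ext u
    simp only [Finset.mem_filter, SimpleGraph.mem_neighborFinset]
    constructor
    · rintro ⟨_, h⟩; exact h
    · intro h
      refine ⟨?_, h⟩
      rw [ht]
      exact Finset.mem_union_right _
        (Finset.mem_biUnion.2 ⟨w, hw, (SimpleGraph.mem_neighborFinset G w u).2 h⟩)
  have hA : ∑ w ∈ s, f w * adjOp G g w = ∑ u ∈ t, adjOp G f u * g u := by
    have step1 : ∀ w ∈ s, f w * adjOp G g w
        = ∑ u ∈ t, if G.Adj w u then f w * g u else 0 := by
      intro w hw
      have : adjOp G g w = ∑ u ∈ t, if G.Adj w u then g u else 0 := by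
        rw [← Finset.sum_filter, hfilt w hw, adjOp]
      rw [this, Finset.mul_sum]
      refine Finset.sum_congr rfl fun u _ => ?_
      split <;> simp
    rw [Finset.sum_congr rfl step1, Finset.sum_comm]
    refine Finset.sum_congr rfl fun u _ => ?_
    have : ∀ w ∈ s, (if G.Adj w u then f w * g u else 0)
        = (if G.Adj u w then f w else 0) * g u := by
      intro w _
      rw [G.adj_comm]
      split <;> simp
    rw [Finset.sum_congr rfl this, ← Finset.sum_mul]
    congr 1
    rw [← Finset.sum_filter]
    refine Finset.sum_subset ?_ ?_
    · intro x hx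
      rw [Finset.mem_filter] at hx
      exact (SimpleGraph.mem_neighborFinset G u x).2 hx.2
    · intro x hx hnx
      apply hvanish
      intro hxs
      exact hnx (Finset.mem_filter.2 ⟨hxs, (SimpleGraph.mem_neighborFinset G u x).1 hx⟩)
  have hB : ∑ w ∈ s, f w * (l * g w) = ∑ u ∈ t, l * f u * g u := by
    rw [Finset.sum_subset hst]
    · refine Finset.sum_congr rfl fun w _ => by ring
    · intro x _ hx
      rw [hvanish x hx]
      ring
  calc ∑ w ∈ s, f w * (adjOp G g w - l * g w)
      = ∑ w ∈ s, (f w * adjOp G g w - f w * (l * g w)) := by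
        refine Finset.sum_congr rfl fun w _ => by ring
    _ = ∑ w ∈ s, f w * adjOp G g w - ∑ w ∈ s, f w * (l * g w) := Finset.sum_sub_distrib _ _
    _ = ∑ u ∈ t, adjOp G f u * g u - ∑ u ∈ t, l * f u * g u := by rw [hA, hB]
    _ = ∑ u ∈ t, (adjOp G f u - l * f u) * g u := by
        rw [← Finset.sum_sub_distrib]
        refine Finset.sum_congr rfl fun u _ => by ring

/-- The image under `A - l` of the indicator of `w`, as a finitely supported function. -/
noncomputable def Bmap (w : V) : V →₀ F :=
  (∑ x ∈ G.neighborFinset w, Finsupp.single x 1) - l • Finsupp.single w 1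

/-- The operator `A - l` on finitely supported functions. -/
noncomputable def Smap : (V →₀ F) →ₗ[F] (V →₀ F) :=
  Finsupp.linearCombination F (Bmap G l)

lemma Bmap_apply (u w : V) :
    Bmap G l u w = (if u ∈ G.neighborFinset w then (1 : F) else 0)
      - l * (if u = w then 1 else 0) := by
  classical
  rw [Bmap, Finsupp.sub_apply, Finsupp.smul_apply, Finset.sum_apply']
  congr 1
  · have : ∀ x ∈ G.neighborFinset u, (Finsupp.single x (1 : F)) w
        = if x = w then (1 : F) else 0 := fun x _ => Finsupp.single_apply
    rw [Finset.sum_congr rfl this, Finset.sum_ite_eq' (G.neighborFinset u) w (fun _ => (1 : F))]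
    congr 1
    simp only [SimpleGraph.mem_neighborFinset, eq_iff_iff]
    exact G.adj_comm u w
  · rw [Finsupp.single_apply, smul_eq_mul]

lemma Smap_apply (f : V →₀ F) (w : V) :
    Smap G l f w = adjOp G (⇑f) w - l * f w := by
  classical
  rw [Smap, Finsupp.linearCombination_apply, Finsupp.sum, Finset.sum_apply']
  have : ∀ u ∈ f.support, (f u • Bmap G l u) w
      = f u * (if u ∈ G.neighborFinset w then (1 : F) else 0)
        - (if u = w then f u * l else 0) := by
    intro u _
    rw [Finsupp.smul_apply, smul_eq_mul, Bmap_apply, mul_sub]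
    congr 1
    by_cases h : u = w <;> simp [h]
  rw [Finset.sum_congr rfl this, Finset.sum_sub_distrib]
  congr 1
  · rw [adjOp]
    have : ∀ u ∈ f.support, f u * (if u ∈ G.neighborFinset w then (1 : F) else 0)
        = if u ∈ G.neighborFinset w then f u else 0 := by
      intro u _; split <;> simp
    rw [Finset.sum_congr rfl this, ← Finset.sum_filter]
    refine Finset.sum_subset ?_ ?_
    · intro x hx
      exact (Finset.mem_filter.1 hx).2
    · intro x hx hnx
      by_contra h
      exact hnx (Finset.mem_filter.2 ⟨Finsupp.mem_support_iff.2 h, hx⟩)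
  · rw [Finset.sum_ite_eq' f.support w (fun u => f u * l)]
    split
    · ring
    · rename_i h
      rw [Finsupp.notMem_support_iff.1 h]
      ring

end Aux

theorem stmt0 {V F : Type*} [DecidableEq V] (G : SimpleGraph V) [G.LocallyFinite] [Field F]
    (l : F) (v : V) :
    (∃ f : V → F, IsEigenfun G l f ∧ (support f).Finite ∧ v ∈ support f) ↔
      ¬ ∃ f : V → F, IsPropagator G l v f := by
  classical
  constructor
  · rintro ⟨f, ⟨hne, heig⟩, hfin, hv⟩ ⟨g, hg⟩
    have hs : support f ⊆ (hfin.toFinset : Finset V) := fun x hx => by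
      simpa using hfin.mem_toFinset.2 hx
    have hpair := pair_lemma G l f g hfin.toFinset hs
    have hRHS : ∑ u ∈ hfin.toFinset ∪ hfin.toFinset.biUnion (fun w => G.neighborFinset w),
        (adjOp G f u - l * f u) * g u = 0 := by
      refine Finset.sum_eq_zero fun u _ => ?_
      rw [heig u, sub_self, zero_mul]
    have hLHS : ∑ w ∈ hfin.toFinset, f w * (adjOp G g w - l * g w) = f v := by
      have : ∀ w ∈ hfin.toFinset, f w * (adjOp G g w - l * g w)
          = if w = v then f w else 0 := by
        intro w _
        rw [hg w]
        split <;> simp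
      rw [Finset.sum_congr rfl this, Finset.sum_ite_eq' hfin.toFinset v f,
        if_pos (hfin.mem_toFinset.2 hv)]
    rw [hLHS, hRHS] at hpair
    exact hv hpair
  · intro hnp
    by_contra hne
    apply hnp
    -- From the non-existence of such an eigenfunction, every finitely supported
    -- element of the kernel of `A - l` vanishes at `v`.
    have hker : ∀ h : V →₀ F, Smap G l h = 0 → h v = 0 := by
      intro h h0
      by_contra hv
      apply hne
      refine ⟨⇑h, ⟨?_, ?_⟩, ?_, hv⟩
      · intro hz
        exact hv (congrFun hz v)
      · intro w
        have := Smap_apply G l h w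
        rw [h0] at this
        simp only [Finsupp.coe_zero, Pi.zero_apply] at this
        exact sub_eq_zero.1 this.symm
      · exact (h.support.finite_toSet).subset fun x hx => Finsupp.mem_support_iff.2 hx
    -- Build a linear functional ψ with ψ (Smap h) = h v for all h.
    let e : (V →₀ F) →ₗ[F] F := Finsupp.lapply v
    have hle : LinearMap.ker (Smap G l) ≤ LinearMap.ker e := by
      intro h hh
      exact hker h hh
    let φ₀ : ((V →₀ F) ⧸ LinearMap.ker (Smap G l)) →ₗ[F] F :=
      Submodule.liftQ _ e hle
    let ι := (Smap G l).quotKerEquivRange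
    let φ : LinearMap.range (Smap G l) →ₗ[F] F := φ₀ ∘ₗ (ι.symm : _ →ₗ[F] _)
    obtain ⟨ψ, hψ⟩ := φ.exists_extend
    have key : ∀ h : V →₀ F, ψ (Smap G l h) = h v := by
      intro h
      have hmem : Smap G l h ∈ LinearMap.range (Smap G l) := ⟨h, rfl⟩
      have h1 : ψ (Smap G l h) = φ ⟨_, hmem⟩ := by
        have := congrArg (fun (m : _ →ₗ[F] F) => m ⟨Smap G l h, hmem⟩) hψ
        exact this
      have h2 : ι.symm ⟨Smap G l h, hmem⟩ = Submodule.Quotient.mk h := by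
        rw [LinearEquiv.symm_apply_eq]
        exact Subtype.ext ((Smap G l).quotKerEquivRange_apply_mk h).symm
      rw [h1]
      show φ₀ (ι.symm ⟨_, hmem⟩) = h v
      rw [h2]
      exact Submodule.liftQ_apply _ e h
    refine ⟨fun u => ψ (Finsupp.single u 1), fun w => ?_⟩
    have hsingle : Smap G l (Finsupp.single w 1) = Bmap G l w := by
      rw [Smap, Finsupp.linearCombination_single, one_smul]
    have hlin : adjOp G (fun u => ψ (Finsupp.single u 1)) w - l * ψ (Finsupp.single w 1)
        = ψ (Bmap G l w) := by
      rw [Bmap, map_sub, map_sum, map_smul, smul_eq_mul, adjOp]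
    rw [hlin, ← hsingle, key, Finsupp.single_apply]
end

section
/- Let Γ be a locally finite simple graph, F a field, λ ∈ F and v a vertex of Γ. Then the following are equivalent: (i) v does not belong to the support of any eigenfunction of A_{Γ,F} corresponding to λ; (ii) there exists an (F,λ)-propagator of Γ with respect to v whose support is finite. -/
open Function

section Aux

variable {V F : Type*} [DecidableEq V] (G : SimpleGraph V) [G.LocallyFinite] [Field F] (l : F)

/-- The delta function at `v`. -/
private def dirac (v : V) : V → F := fun w => if w = v then 1 else 0

/-- `A - l` as a linear map from finitely supported functions to all functions. -/
private def Tmap : (V →₀ F) →ₗ[F] (V → F) where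
  toFun g := fun w => adjOp G (⇑g) w - l * g w
  map_add' g h := funext fun w => by
    simp only [adjOp, Finsupp.coe_add, Pi.add_apply, Finset.sum_add_distrib]
    ring
  map_smul' c g := funext fun w => by
    simp only [adjOp, Finsupp.coe_smul, Pi.smul_apply, smul_eq_mul, RingHom.id_apply,
      ← Finset.mul_sum]
    ring

private lemma sum_dirac_eq (u : V) :
    (∑ w ∈ G.neighborFinset u, (dirac w : V → F)) =
      Tmap G l (Finsupp.single u 1) + l • (dirac u : V → F) := by
  funext x
  have h1 : (∑ w ∈ G.neighborFinset u, (dirac w : V → F)) x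
      = if x ∈ G.neighborFinset u then (1 : F) else 0 := by
    rw [Finset.sum_apply]
    simp only [dirac]
    rw [Finset.sum_ite_eq (G.neighborFinset u) x (fun _ => (1 : F))]
  have h2 : adjOp G (⇑(Finsupp.single u (1 : F))) x
      = if u ∈ G.neighborFinset x then (1 : F) else 0 := by
    unfold adjOp
    simp only [Finsupp.single_apply]
    rw [Finset.sum_ite_eq (G.neighborFinset x) u (fun _ => (1 : F))]
  have h3 : (x ∈ G.neighborFinset u) ↔ (u ∈ G.neighborFinset x) := by
    simp [SimpleGraph.mem_neighborFinset, G.adj_comm]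
  simp only [Pi.add_apply, Pi.smul_apply, smul_eq_mul, Tmap, LinearMap.coe_mk,
    AddHom.coe_mk, h1, h2, dirac, Finsupp.single_apply]
  by_cases hxu : x ∈ G.neighborFinset u
  · rw [if_pos (h3.mp hxu), if_pos hxu]
    by_cases h : x = u
    · subst h; simp
    · simp [h, Ne.symm h]
  · rw [if_neg (fun h => hxu (h3.mpr h)), if_neg hxu]
    by_cases h : x = u
    · subst h; simp
    · simp [h, Ne.symm h]

end Aux

theorem stmt1 {V F : Type*} [DecidableEq V] (G : SimpleGraph V) [G.LocallyFinite] [Field F]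
    (l : F) (v : V) :
    (∀ f : V → F, IsEigenfun G l f → v ∉ support f) ↔
      ∃ f : V → F, IsPropagator G l v f ∧ (support f).Finite := by
  classical
  constructor
  · -- (i) → (ii)
    intro h
    by_contra hne
    have hmem : (dirac v : V → F) ∉ LinearMap.range (Tmap G l) := by
      rintro ⟨g, hgeq⟩
      refine hne ⟨⇑g, fun w => ?_, g.finite_support⟩
      have := congrFun hgeq w
      simpa [Tmap, dirac] using this
    obtain ⟨φ, hφv, hφbot⟩ :=
      (LinearMap.range (Tmap G l)).exists_dual_map_eq_bot_of_notMem hmem inferInstance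
    set f : V → F := fun w => φ (dirac w) with hf
    have hker : ∀ x ∈ LinearMap.range (Tmap G l), φ x = 0 := by
      intro x hx
      have : φ x ∈ (LinearMap.range (Tmap G l)).map φ := Submodule.mem_map_of_mem hx
      rw [hφbot] at this
      exact (Submodule.mem_bot F).mp this
    have key : ∀ u, adjOp G f u = l * f u := by
      intro u
      have : adjOp G f u = φ (∑ w ∈ G.neighborFinset u, (dirac w : V → F)) := by
        rw [map_sum]; rfl
      rw [this, sum_dirac_eq G l u, map_add, map_smul,
        hker _ (LinearMap.mem_range_self _ _)]
      simp [hf]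
    have hfe : IsEigenfun G l f := by
      refine ⟨fun h0 => hφv ?_, key⟩
      have := congrFun h0 v
      simpa [hf] using this
    exact h f hfe (Function.mem_support.mpr hφv)
  · -- (ii) → (i)
    rintro ⟨g, hg, hgfin⟩ f ⟨hfne, hfe⟩ hv
    set s := hgfin.toFinset with hs
    set t := s ∪ s.biUnion (fun u => G.neighborFinset u) with ht
    have hsg : ∀ u, u ∉ s → g u = 0 := by
      intro u hu
      by_contra hne'
      exact hu (hgfin.mem_toFinset.mpr hne')
    have hNt : ∀ u ∈ s, G.neighborFinset u ⊆ t := fun u hu w hw =>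
      Finset.mem_union_right _ (Finset.mem_biUnion.mpr ⟨u, hu, hw⟩)
    have key1 : ∀ u ∈ s, adjOp G f u = ∑ w ∈ t, if G.Adj u w then f w else 0 := by
      intro u hu
      rw [adjOp, ← Finset.sum_filter]
      congr 1
      ext w
      simp only [Finset.mem_filter, SimpleGraph.mem_neighborFinset]
      exact ⟨fun hw => ⟨hNt u hu ((SimpleGraph.mem_neighborFinset _ _ _).mpr hw), hw⟩, fun hw => hw.2⟩
    have key2 : ∀ w, adjOp G g w = ∑ u ∈ s, if G.Adj w u then g u else 0 := by
      intro w
      rw [adjOp, ← Finset.sum_filter]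
      rw [← Finset.sum_filter_of_ne (p := fun u => u ∈ s)
        (fun u _ hu => hgfin.mem_toFinset.mpr hu)]
      congr 1
      ext u
      simp only [Finset.mem_filter, SimpleGraph.mem_neighborFinset]
      tauto
    have hdouble : ∑ u ∈ s, g u * adjOp G f u = ∑ w ∈ t, f w * adjOp G g w := by
      calc ∑ u ∈ s, g u * adjOp G f u
          = ∑ u ∈ s, ∑ w ∈ t, if G.Adj u w then g u * f w else 0 := by
            refine Finset.sum_congr rfl fun u hu => ?_
            rw [key1 u hu, Finset.mul_sum]
            exact Finset.sum_congr rfl fun w _ => by rw [mul_ite, mul_zero]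
        _ = ∑ w ∈ t, ∑ u ∈ s, if G.Adj u w then g u * f w else 0 := Finset.sum_comm
        _ = ∑ w ∈ t, f w * adjOp G g w := by
            refine Finset.sum_congr rfl fun w _ => ?_
            rw [key2 w, Finset.mul_sum]
            refine Finset.sum_congr rfl fun u _ => ?_
            rw [G.adj_comm]
            split_ifs <;> ring
    have hvt : v ∈ t := by
      by_contra hvt
      have h0 : adjOp G g v - l * g v = 1 := by simpa using hg v
      have hgv : g v = 0 := hsg v (fun hvs => hvt (Finset.mem_union_left _ hvs))
      have hA : adjOp G g v = 0 := by
        apply Finset.sum_eq_zero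
        intro u hu
        apply hsg
        intro hus
        exact hvt (hNt u hus ((SimpleGraph.mem_neighborFinset _ _ _).mpr
          ((SimpleGraph.mem_neighborFinset _ _ _).mp hu).symm))
      rw [hA, hgv, mul_zero, sub_zero] at h0
      exact zero_ne_one h0
    have hsum1 : ∑ u ∈ s, g u * (adjOp G f u - l * f u) = 0 :=
      Finset.sum_eq_zero fun u _ => by rw [hfe u]; ring
    have hsum2 : ∑ w ∈ t, f w * (adjOp G g w - l * g w) = f v := by
      have : ∀ w ∈ t, f w * (adjOp G g w - l * g w) = if w = v then f w else 0 := by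
        intro w _
        rw [hg w]
        split_ifs <;> ring
      rw [Finset.sum_congr rfl this, Finset.sum_ite_eq' t v f, if_pos hvt]
    have hcross : ∑ w ∈ t, f w * g w = ∑ u ∈ s, g u * f u := by
      rw [← Finset.sum_subset (Finset.subset_union_left)
        (fun x _ hx => by rw [hsg x hx, mul_zero])]
      exact Finset.sum_congr rfl fun u _ => mul_comm _ _
    have hfv : f v = 0 := by
      calc f v = ∑ w ∈ t, f w * (adjOp G g w - l * g w) := hsum2.symm
        _ = ∑ w ∈ t, f w * adjOp G g w - ∑ w ∈ t, l * (f w * g w) := by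
            rw [← Finset.sum_sub_distrib]
            exact Finset.sum_congr rfl fun w _ => by ring
        _ = ∑ u ∈ s, g u * adjOp G f u - ∑ u ∈ s, l * (g u * f u) := by
            rw [← hdouble, ← Finset.mul_sum, hcross, Finset.mul_sum]
        _ = ∑ u ∈ s, g u * (adjOp G f u - l * f u) := by
            rw [← Finset.sum_sub_distrib]
            exact Finset.sum_congr rfl fun u _ => by ring
        _ = 0 := hsum1
    exact (Function.mem_support.mp hv) hfv
end

section
/- Let Γ be a locally finite simple graph, F a field and λ ∈ F. If the set S_{F,λ}(Γ) is infinite, then there exists an eigenfunction of A_{Γ,F} corresponding to λ whose support is infinite and contained in S_{F,λ}(Γ). -/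
open Function

section Aux

variable {V F : Type*} [DecidableEq V] (G : SimpleGraph V) [G.LocallyFinite] [Field F] (l : F)

/-- The operator `A - l` on finitely supported functions. -/
noncomputable def B0 : (V →₀ F) →ₗ[F] (V →₀ F) where
  toFun g := Finsupp.onFinset
      (g.support ∪ g.support.biUnion (fun u => G.neighborFinset u))
      (fun w => adjOp G ⇑g w - l * g w)
      (by
        intro w hw
        by_contra hmem
        simp only [Finset.mem_union, Finset.mem_biUnion, Finsupp.mem_support_iff, not_or,
          not_not, not_exists, not_and] at hmem
        apply hw
        show adjOp G ⇑g w - l * g w = 0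
        have h1 : g w = 0 := hmem.1
        have h2 : adjOp G ⇑g w = 0 := by
          apply Finset.sum_eq_zero
          intro u hu
          by_contra hgu
          exact hmem.2 u hgu ((G.mem_neighborFinset _ _).2 ((G.mem_neighborFinset _ _).1 hu).symm)
        rw [h1, h2]; ring)
  map_add' g h := by
    ext w
    simp only [Finsupp.onFinset_apply, Finsupp.coe_add, Pi.add_apply, Finsupp.add_apply]
    unfold adjOp
    simp only [Pi.add_apply]
    rw [Finset.sum_add_distrib]
    ring
  map_smul' c g := by
    ext w
    simp only [Finsupp.onFinset_apply, Finsupp.coe_smul, Pi.smul_apply, smul_eq_mul,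
      RingHom.id_apply, Finsupp.smul_apply]
    unfold adjOp
    simp only [Pi.smul_apply, smul_eq_mul]
    rw [mul_sub, Finset.mul_sum]
    ring

lemma B0_apply (g : V →₀ F) (w : V) : B0 G l g w = adjOp G ⇑g w - l * g w := rfl

lemma mem_ker_B0 (g : V →₀ F) :
    g ∈ LinearMap.ker (B0 G l) ↔ ∀ w, adjOp G ⇑g w = l * g w := by
  rw [LinearMap.mem_ker]
  constructor
  · intro hg w
    have := congrArg (fun x : V →₀ F => x w) hg
    simp only [B0_apply, Finsupp.coe_zero, Pi.zero_apply] at this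
    exact sub_eq_zero.1 this
  · intro hg
    ext w
    simp [B0_apply, hg w]

/-- Symmetry of the pairing: the key double-sum swap. -/
lemma pairing_symm (f : V → F) (g : V →₀ F) (s : Finset V)
    (hsupp : g.support ⊆ s) (hnb : ∀ w ∈ g.support, G.neighborFinset w ⊆ s) :
    ∑ w ∈ s, adjOp G f w * g w = ∑ w ∈ s, f w * adjOp G ⇑g w := by
  classical
  have lhs : ∑ w ∈ s, adjOp G f w * g w
      = ∑ w ∈ s, ∑ u ∈ s, (if G.Adj w u then f u * g w else 0) := by
    apply Finset.sum_congr rfl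
    intro w _
    unfold adjOp
    rw [Finset.sum_mul]
    by_cases hw : g w = 0
    · simp [hw]
    · have hws : G.neighborFinset w ⊆ s := hnb w (Finsupp.mem_support_iff.2 hw)
      have heq : G.neighborFinset w = s.filter (fun u => G.Adj w u) := by
        ext u
        simp only [Finset.mem_filter, SimpleGraph.mem_neighborFinset]
        exact ⟨fun hadj => ⟨hws ((G.mem_neighborFinset w u).2 hadj), hadj⟩, fun hp => hp.2⟩
      rw [heq, Finset.sum_filter]
  have rhs : ∑ w ∈ s, f w * adjOp G ⇑g w
      = ∑ w ∈ s, ∑ u ∈ s, (if G.Adj w u then f w * g u else 0) := by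
    apply Finset.sum_congr rfl
    intro w _
    unfold adjOp
    rw [Finset.mul_sum, ← Finset.sum_filter]
    refine (Finset.sum_subset ?_ ?_).symm
    · intro u hu
      simp only [Finset.mem_filter] at hu
      exact (G.mem_neighborFinset w u).2 hu.2
    · intro u hu hu'
      simp only [Finset.mem_filter, not_and] at hu'
      have hadj : G.Adj w u := (G.mem_neighborFinset w u).1 hu
      have : g u = 0 := by
        by_contra hgu
        exact hu' (hsupp (Finsupp.mem_support_iff.2 hgu)) hadj
      simp [this]
  rw [lhs, rhs, Finset.sum_comm]
  apply Finset.sum_congr rfl; intro w _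
  apply Finset.sum_congr rfl; intro u _
  by_cases hadj : G.Adj w u
  · simp [hadj, hadj.symm]
  · have hadj' : ¬ G.Adj u w := fun h' => hadj h'.symm
    simp [hadj, hadj']

/-- If `g` is a finitely supported eigenfunction and `g v ≠ 0`, then `v` has no propagator. -/
lemma no_propagator_of_kernel (g : V →₀ F) (hg : ∀ w, adjOp G ⇑g w = l * g w)
    (v : V) (hv : g v ≠ 0) : ¬ ∃ f : V → F, IsPropagator G l v f := by
  rintro ⟨f, hf⟩
  classical
  set s : Finset V :=
    insert v (g.support ∪ g.support.biUnion (fun u => G.neighborFinset u)) with hs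
  have hsupp : g.support ⊆ s := fun w hw => by
    simp [hs, Finset.mem_insert, Finset.mem_union, hw]
  have hnb : ∀ w ∈ g.support, G.neighborFinset w ⊆ s := by
    intro w hw u hu
    simp only [hs, Finset.mem_insert, Finset.mem_union, Finset.mem_biUnion]
    exact Or.inr (Or.inr ⟨w, hw, hu⟩)
  have hvs : v ∈ s := Finset.mem_insert_self _ _
  have key : ∑ w ∈ s, (adjOp G f w - l * f w) * g w = g v := by
    rw [Finset.sum_congr rfl (fun w _ => by rw [hf w])]
    rw [Finset.sum_eq_single v]
    · simp
    · intro w _ hwv; simp [hwv]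
    · intro habs; exact absurd hvs habs
  have key2 : ∑ w ∈ s, (adjOp G f w - l * f w) * g w = 0 := by
    have e1 : ∀ w ∈ s, (adjOp G f w - l * f w) * g w
        = adjOp G f w * g w - l * (f w * g w) := by intro w _; ring
    rw [Finset.sum_congr rfl e1, Finset.sum_sub_distrib, ← Finset.mul_sum,
      pairing_symm G f g s hsupp hnb]
    have e2 : ∀ w ∈ s, f w * adjOp G ⇑g w = l * (f w * g w) := by
      intro w _; rw [hg w]; ring
    rw [Finset.sum_congr rfl e2, ← Finset.mul_sum, sub_self]
  exact hv (by rw [← key, key2])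

/-- If `v` has no propagator, some finitely supported eigenfunction is nonzero at `v`. -/
lemma exists_kernel_of_no_propagator (v : V)
    (hv : ¬ ∃ f : V → F, IsPropagator G l v f) :
    ∃ g : V →₀ F, g ∈ LinearMap.ker (B0 G l) ∧ g v ≠ 0 := by
  classical
  by_contra hcon
  push_neg at hcon
  have hle : LinearMap.ker (B0 G l) ≤ LinearMap.ker (Finsupp.lapply v : (V →₀ F) →ₗ[F] F) := by
    intro g hg
    simp only [LinearMap.mem_ker, Finsupp.lapply_apply]
    exact hcon g hg
  -- factor `lapply v` through the range of `B0`
  let φ : LinearMap.range (B0 G l) →ₗ[F] F :=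
    (Submodule.liftQ (LinearMap.ker (B0 G l)) (Finsupp.lapply v) hle).comp
      (B0 G l).quotKerEquivRange.symm.toLinearMap
  obtain ⟨ψ, hψ⟩ := LinearMap.exists_extend φ
  have hψB : ∀ g : V →₀ F, ψ (B0 G l g) = g v := by
    intro g
    have h1 : (B0 G l).quotKerEquivRange (Submodule.Quotient.mk g)
        = ⟨B0 G l g, LinearMap.mem_range_self _ g⟩ := by
      apply Subtype.ext
      exact LinearMap.quotKerEquivRange_apply_mk _ g
    have h2 : ψ (B0 G l g) = φ ⟨B0 G l g, LinearMap.mem_range_self _ g⟩ := by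
      have := congrArg (fun m => m ⟨B0 G l g, LinearMap.mem_range_self _ g⟩) hψ
      simpa using this
    rw [h2]
    show (Submodule.liftQ _ _ hle) ((B0 G l).quotKerEquivRange.symm
      ⟨B0 G l g, LinearMap.mem_range_self _ g⟩) = g v
    rw [← h1, LinearEquiv.symm_apply_apply, Submodule.liftQ_apply, Finsupp.lapply_apply]
  apply hv
  refine ⟨fun u => ψ (Finsupp.single u 1), ?_⟩
  intro w
  have hBsingle : B0 G l (Finsupp.single w 1)
      = (∑ u ∈ G.neighborFinset w, Finsupp.single u (1:F)) - l • Finsupp.single w 1 := by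
    ext x
    rw [B0_apply]
    simp only [Finsupp.coe_sub, Pi.sub_apply, Finsupp.smul_apply, smul_eq_mul]
    congr 1
    · unfold adjOp
      rw [Finsupp.finset_sum_apply]
      simp only [Finsupp.single_apply]
      rw [Finset.sum_ite_eq (G.neighborFinset x) w (fun _ => (1:F)),
        Finset.sum_ite_eq' (G.neighborFinset w) x (fun _ => (1:F))]
      by_cases hxw : G.Adj x w
      · rw [if_pos ((G.mem_neighborFinset x w).2 hxw),
          if_pos ((G.mem_neighborFinset w x).2 hxw.symm)]
      · rw [if_neg (fun hm => hxw ((G.mem_neighborFinset x w).1 hm)),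
          if_neg (fun hm => hxw (((G.mem_neighborFinset w x).1 hm).symm))]
  have : adjOp G (fun u => ψ (Finsupp.single u 1)) w - l * ψ (Finsupp.single w 1)
      = ψ (B0 G l (Finsupp.single w 1)) := by
    rw [hBsingle, map_sub, map_smul]
    unfold adjOp
    rw [map_sum]
    simp [smul_eq_mul]
  rw [this, hψB, Finsupp.single_apply]

end Aux

theorem stmt5 {V F : Type*} [DecidableEq V] (G : SimpleGraph V) [G.LocallyFinite] [Field F]
    (l : F)
    (h : {v : V | ¬ ∃ f : V → F, IsPropagator G l v f}.Infinite) :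
    ∃ f : V → F, IsEigenfun G l f ∧ (support f).Infinite ∧
      support f ⊆ {v : V | ¬ ∃ g : V → F, IsPropagator G l v g} := by
  classical
  set S := {v : V | ¬ ∃ f : V → F, IsPropagator G l v f} with hS
  by_cases H : ∀ T : Finset V, ∃ g : V →₀ F,
      g ∈ LinearMap.ker (B0 G l) ∧ g ≠ 0 ∧ ∀ w ∈ T, g w = 0
  · -- build a sequence of kernel elements with pairwise disjoint supports
    choose gg hker hne hvan using H
    set T : ℕ → Finset V := fun n => Nat.rec ∅ (fun _ Tn => Tn ∪ (gg Tn).support) n with hT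
    have hT0 : T 0 = ∅ := rfl
    have hTsucc : ∀ n, T (n + 1) = T n ∪ (gg (T n)).support := fun n => rfl
    set g : ℕ → V →₀ F := fun n => gg (T n) with hgdef
    have hmono : ∀ m n, m ≤ n → T m ⊆ T n := by
      intro m n hmn
      induction hmn with
      | refl => exact subset_rfl
      | step h ih => exact ih.trans (by rw [hTsucc]; exact Finset.subset_union_left)
    have hsuppT : ∀ n, (g n).support ⊆ T (n + 1) := by
      intro n; rw [hTsucc]; exact Finset.subset_union_right
    have hdisj : ∀ m n, m < n → ∀ w, g m w = 0 ∨ g n w = 0 := by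
      intro m n hmn w
      by_cases hw : g m w = 0
      · exact Or.inl hw
      · right
        have hwT : w ∈ T n := hmono (m + 1) n hmn (hsuppT m (Finsupp.mem_support_iff.2 hw))
        exact hvan (T n) w hwT
    have hdisj' : ∀ m n, m ≠ n → ∀ w, g m w = 0 ∨ g n w = 0 := by
      intro m n hmn w
      rcases lt_or_gt_of_ne hmn with h' | h'
      · exact hdisj m n h' w
      · exact (hdisj n m h' w).symm
    have hfin : ∀ u : V, (Function.support fun n => g n u).Finite := by
      intro u
      apply Set.Subsingleton.finite
      intro m hm n hn
      by_contra hmn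
      rcases hdisj' m n hmn u with h' | h'
      · exact hm h'
      · exact hn h'
    set f : V → F := fun w => ∑ᶠ n, g n w with hf
    -- pointwise evaluation at a point where some gₙ is nonzero
    have heval : ∀ n w, g n w ≠ 0 → f w = g n w := by
      intro n w hw
      apply finsum_eq_single
      intro m hm
      rcases hdisj' m n hm w with h' | h'
      · exact h'
      · exact absurd h' hw
    -- eigenvalue equation
    have heig : ∀ w, adjOp G f w = l * f w := by
      intro w
      set s : Finset V := insert w (G.neighborFinset w) with hs
      have hMfin : (⋃ u ∈ (s : Finset V), Function.support fun n => g n u).Finite :=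
        Set.Finite.biUnion s.finite_toSet (fun u _ => hfin u)
      set J : Finset ℕ := hMfin.toFinset with hJ
      have hkey : ∀ u ∈ s, f u = ∑ n ∈ J, g n u := by
        intro u hu
        apply finsum_eq_sum_of_support_subset
        intro n hn
        simp only [hJ, Set.Finite.coe_toFinset, Set.mem_iUnion]
        exact ⟨u, hu, hn⟩
      have h1 : adjOp G f w = ∑ u ∈ G.neighborFinset w, ∑ n ∈ J, g n u := by
        unfold adjOp
        exact Finset.sum_congr rfl fun u hu =>
          hkey u (Finset.mem_insert_of_mem hu)
      rw [h1, Finset.sum_comm]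
      have h2 : ∀ n ∈ J, ∑ u ∈ G.neighborFinset w, g n u = l * g n w := by
        intro n _
        exact (mem_ker_B0 G l (g n)).1 (hker (T n)) w
      rw [Finset.sum_congr rfl h2, ← Finset.mul_sum,
        hkey w (Finset.mem_insert_self _ _)]
    -- choose a point in each support
    have hwit : ∀ n, ∃ w, g n w ≠ 0 := by
      intro n
      by_contra hc
      push_neg at hc
      exact hne (T n) (Finsupp.ext fun w => hc w)
    choose wit hwit' using hwit
    have hinj : Function.Injective wit := by
      intro m n hmn
      by_contra hne'
      rcases hdisj' m n hne' (wit m) with h' | h'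
      · exact hwit' m h'
      · rw [hmn] at h'; exact hwit' n h'
    have hmem : ∀ n, wit n ∈ support f := by
      intro n
      rw [Function.mem_support, heval n (wit n) (hwit' n)]
      exact hwit' n
    have hsubS : support f ⊆ S := by
      intro w hw
      rw [Function.mem_support] at hw
      have : ∃ n, g n w ≠ 0 := by
        by_contra hc
        push_neg at hc
        apply hw
        rw [hf]
        exact finsum_eq_zero_of_forall_eq_zero hc
      obtain ⟨n, hn⟩ := this
      exact no_propagator_of_kernel G l (g n)
        ((mem_ker_B0 G l (g n)).1 (hker (T n))) w hn
    refine ⟨f, ⟨?_, heig⟩, ?_, hsubS⟩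
    · intro hf0
      have := hmem 0
      rw [hf0] at this
      simp at this
    · exact Set.infinite_of_injective_forall_mem hinj hmem
  · -- otherwise the kernel is finite dimensional and S would be finite: contradiction
    exfalso
    push_neg at H
    obtain ⟨T, hT⟩ := H
    have hTvan : ∀ g : V →₀ F, g ∈ LinearMap.ker (B0 G l) → (∀ w ∈ T, g w = 0) → g = 0 := by
      intro g hg hvan
      by_contra hg0
      obtain ⟨w, hwT, hw⟩ := hT g hg hg0
      exact hw (hvan w hwT)
    let r : ↥(LinearMap.ker (B0 G l)) →ₗ[F] (↑(T : Finset V) → F) :=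
      { toFun := fun g => fun t => (g : V →₀ F) t
        map_add' := fun a b => by ext t; simp
        map_smul' := fun c a => by ext t; simp }
    have hrinj : Function.Injective r := by
      intro a b hab
      have hd : ∀ w ∈ T, ((a - b : ↥(LinearMap.ker (B0 G l))) : V →₀ F) w = 0 := by
        intro w hw
        have hfw := congrFun hab ⟨w, hw⟩
        simp only [r, LinearMap.coe_mk, AddHom.coe_mk] at hfw
        simp [Finsupp.sub_apply, hfw]
      have h0 : ((a - b : ↥(LinearMap.ker (B0 G l))) : V →₀ F) = 0 :=
        hTvan _ (a - b).2 hd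
      have hab0 : a - b = 0 := Subtype.ext h0
      exact sub_eq_zero.1 hab0
    haveI : FiniteDimensional F ↥(LinearMap.ker (B0 G l)) :=
      FiniteDimensional.of_injective r hrinj
    have hfg : (LinearMap.ker (B0 G l)).FG := Module.Finite.iff_fg.mp inferInstance
    obtain ⟨sgen, hspan⟩ := hfg
    set U : Finset V := sgen.biUnion (fun g => g.support) with hU
    have hker_le : LinearMap.ker (B0 G l) ≤ Finsupp.supported F F ↑U := by
      rw [← hspan, Submodule.span_le]
      intro x hx
      rw [SetLike.mem_coe, Finsupp.mem_supported]
      intro w hw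
      simp only [hU, Finset.coe_biUnion, Set.mem_iUnion]
      exact ⟨x, hx, hw⟩
    have hSsub : S ⊆ ↑U := by
      intro v hv
      obtain ⟨g, hgker, hgv⟩ := exists_kernel_of_no_propagator G l v hv
      have hsup : ↑g.support ⊆ (↑U : Set V) := (Finsupp.mem_supported F g).1 (hker_le hgker)
      exact hsup (Finsupp.mem_support_iff.2 hgv)
    exact h (Set.Finite.subset U.finite_toSet hSsub)
end

section
/- Let Γ be a locally finite simple graph, F a field, λ ∈ F and v a vertex of Γ. If Γ admits an (F,λ)-propagator with respect to v whose support is infinite, then A_{Γ,F} has an eigenfunction corresponding to λ with infinite support. If in addition no (F,λ)-propagator of Γ with respect to v has finite support, then such an eigenfunction can be chosen so that its (infinite) support contains v. -/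
open Function

lemma lemA {V F : Type*} [DecidableEq V] (G : SimpleGraph V) [G.LocallyFinite] [Field F]
    (l : F) (v : V) (f : V → F) (hf : IsPropagator G l v f)
    (g : V → F) (hg : ∀ w, adjOp G g w = l * g w) (hfin : (support g).Finite) :
    g v = 0 := by
  classical
  set S : Finset V := hfin.toFinset with hS
  set B : Finset V := (S ∪ S.biUnion (fun w => G.neighborFinset w)) ∪ {v} with hB
  have hSB : S ⊆ B := by intro x hx; simp [hB, hx]
  have hvB : v ∈ B := by simp [hB]
  have hgz : ∀ w, w ∉ B → g w = 0 := by
    intro w hw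
    by_contra hcon
    exact hw (hSB (by simp [hS, Function.mem_support, hcon]))
  have hNB : ∀ w ∈ S, G.neighborFinset w ⊆ B := by
    intro w hw u hu
    simp only [hB, Finset.mem_union, Finset.mem_biUnion]
    exact Or.inl (Or.inr ⟨w, hw, hu⟩)
  have key : ∀ w ∈ B, adjOp G f w * g w = ∑ u ∈ B, if G.Adj w u then f u * g w else 0 := by
    intro w _
    by_cases hgw : g w = 0
    · simp [hgw]
    · have hwS : w ∈ S := by simp [hS, Function.mem_support, hgw]
      have hsub := hNB w hwS
      have hBI : B ∩ G.neighborFinset w = G.neighborFinset w := Finset.inter_eq_right.mpr hsub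
      rw [adjOp, Finset.sum_mul, ← hBI, ← Finset.sum_ite_mem]
      exact Finset.sum_congr rfl fun u _ => by simp [SimpleGraph.mem_neighborFinset]
  have key2 : ∀ w ∈ B, f w * adjOp G g w = ∑ u ∈ B, if G.Adj w u then f w * g u else 0 := by
    intro w _
    rw [adjOp, Finset.mul_sum]
    have hext : (∑ u ∈ B ∩ G.neighborFinset w, f w * g u)
        = ∑ u ∈ G.neighborFinset w, f w * g u := by
      apply Finset.sum_subset Finset.inter_subset_right
      intro u hu hnu
      have : u ∉ B := fun hb => hnu (Finset.mem_inter.mpr ⟨hb, hu⟩)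
      rw [hgz u this, mul_zero]
    rw [← hext, ← Finset.sum_ite_mem]
    exact Finset.sum_congr rfl fun u _ => by simp [SimpleGraph.mem_neighborFinset]
  have swap : ∑ w ∈ B, adjOp G f w * g w = ∑ w ∈ B, f w * adjOp G g w := by
    rw [Finset.sum_congr rfl key, Finset.sum_congr rfl key2, Finset.sum_comm]
    apply Finset.sum_congr rfl; intro u _
    apply Finset.sum_congr rfl; intro w _
    rw [G.adj_comm]
  have calc1 : ∑ w ∈ B, (adjOp G f w - l * f w) * g w = g v := by
    have h1 : ∀ w ∈ B, (adjOp G f w - l * f w) * g w = if w = v then g w else 0 := by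
      intro w _; rw [hf w]; split <;> simp
    rw [Finset.sum_congr rfl h1, Finset.sum_ite_eq' B v g, if_pos hvB]
  have calc2 : ∑ w ∈ B, (adjOp G f w - l * f w) * g w = 0 := by
    have h1 : ∀ w ∈ B, (adjOp G f w - l * f w) * g w = adjOp G f w * g w - f w * (l * g w) := by
      intro w _; ring
    rw [Finset.sum_congr rfl h1, Finset.sum_sub_distrib, swap, ← Finset.sum_sub_distrib]
    apply Finset.sum_eq_zero
    intro w _
    rw [← hg w]; ring
  exact calc1.symm.trans calc2

theorem stmt6 {V F : Type*} [DecidableEq V] (G : SimpleGraph V) [G.LocallyFinite] [Field F]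
    (l : F) (v : V)
    (h : ∃ f : V → F, IsPropagator G l v f ∧ (support f).Infinite) :
    (∃ f : V → F, IsEigenfun G l f ∧ (support f).Infinite) ∧
      ((¬ ∃ f : V → F, IsPropagator G l v f ∧ (support f).Finite) →
        ∃ f : V → F, IsEigenfun G l f ∧ (support f).Infinite ∧ v ∈ support f) := by
  classical
  obtain ⟨f, hf, hfsupp⟩ := h
  by_cases hfin : ∃ g : V → F, IsPropagator G l v g ∧ (support g).Finite
  · obtain ⟨g0, hg0, hg0fin⟩ := hfin
    have heigfun : ∀ w, adjOp G (f - g0) w = l * (f - g0) w := by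
      intro w
      have hsub : adjOp G (f - g0) w = adjOp G f w - adjOp G g0 w := by
        simp [adjOp, Finset.sum_sub_distrib]
      rw [hsub, Pi.sub_apply]
      linear_combination hf w - hg0 w
    have hsub : support f \ support g0 ⊆ support (f - g0) := by
      intro w hw
      obtain ⟨h1, h2⟩ := hw
      rw [Function.mem_support] at h1 ⊢
      rw [Function.notMem_support] at h2
      rw [Pi.sub_apply, h2, sub_zero]
      exact h1
    have hInf : (support (f - g0)).Infinite := (hfsupp.diff hg0fin).mono hsub
    have hne : f - g0 ≠ 0 := by
      intro h0
      rw [h0] at hInf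
      exact hInf (by simp)
    exact ⟨⟨f - g0, ⟨hne, heigfun⟩, hInf⟩,
      fun h2 => absurd ⟨g0, hg0, hg0fin⟩ h2⟩
  · set p : V → (V →₀ F) := fun w =>
      (∑ u ∈ G.neighborFinset w, Finsupp.single u 1) - l • Finsupp.single w 1 with hp
    have hpval : ∀ w u, p w u
        = (if u ∈ G.neighborFinset w then (1:F) else 0) - l * (if w = u then 1 else 0) := by
      intro w u
      simp only [hp, Finsupp.coe_sub, Pi.sub_apply, Finsupp.smul_apply,
        Finsupp.finset_sum_apply, Finsupp.single_apply, smul_eq_mul]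
      rw [Finset.sum_ite_eq' (G.neighborFinset w) u (fun _ => (1:F))]
    by_cases hv : Finsupp.single v (1:F) ∈ Submodule.span F (Set.range p)
    · exfalso
      rw [Finsupp.mem_span_range_iff_exists_finsupp] at hv
      obtain ⟨c, hc⟩ := hv
      apply hfin
      refine ⟨fun w => c w, ?_, ?_⟩
      · intro u
        have h1 : ∑ w ∈ c.support, c w * p w u = (Finsupp.single v (1:F)) u := by
          have := congrArg (fun q : V →₀ F => q u) hc
          simpa [Finsupp.sum, Finsupp.finset_sum_apply, smul_eq_mul] using this
        have h2 : ∑ w ∈ c.support, c w * p w u = adjOp G (fun w => c w) u - l * c u := by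
          have hterm : ∀ w ∈ c.support, c w * p w u =
              (if w ∈ G.neighborFinset u then c w else 0) - (if w = u then l * c w else 0) := by
            intro w _
            rw [hpval]
            have hadj : u ∈ G.neighborFinset w ↔ w ∈ G.neighborFinset u := by
              simp [SimpleGraph.mem_neighborFinset, SimpleGraph.adj_comm]
            rw [if_congr hadj rfl rfl]
            split <;> split <;> ring
          rw [Finset.sum_congr rfl hterm, Finset.sum_sub_distrib]
          congr 1
          · rw [Finset.sum_ite_mem]
            rw [adjOp]
            apply Finset.sum_subset Finset.inter_subset_right
            intro w hw hnw
            have : w ∉ c.support := fun hs => hnw (Finset.mem_inter.mpr ⟨hs, hw⟩)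
            exact Finsupp.notMem_support_iff.mp this
          · rw [Finset.sum_ite_eq' c.support u (fun w => l * c w)]
            by_cases hu : u ∈ c.support
            · rw [if_pos hu]
            · rw [if_neg hu, Finsupp.notMem_support_iff.mp hu, mul_zero]
        rw [← h2, h1, Finsupp.single_apply]
        simp [eq_comm]
      · rw [show (fun w => c w) = ⇑c from rfl, Finsupp.fun_support_eq]
        exact c.support.finite_toSet
    · set W := Submodule.span F (Set.range p) with hW
      have hx : (Submodule.Quotient.mk (Finsupp.single v (1:F)) : (V →₀ F) ⧸ W) ≠ 0 := by
        rw [Ne, Submodule.Quotient.mk_eq_zero]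
        exact hv
      obtain ⟨φ, hφ⟩ : ∃ φ : Module.Dual F ((V →₀ F) ⧸ W),
          φ (Submodule.Quotient.mk (Finsupp.single v (1:F))) ≠ 0 := by
        by_contra hcon
        push_neg at hcon
        exact hx ((Module.forall_dual_apply_eq_zero_iff F _).mp hcon)
      set ψ : (V →₀ F) →ₗ[F] F := φ.comp W.mkQ with hψ
      set g : V → F := fun w => ψ (Finsupp.single w 1) with hgdef
      have hψW : ∀ x ∈ W, ψ x = 0 := by
        intro x hxW
        have : W.mkQ x = 0 := (Submodule.Quotient.mk_eq_zero W).mpr hxW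
        simp [hψ, LinearMap.comp_apply, this]
      have hgv : g v ≠ 0 := by
        simpa [hgdef, hψ, Submodule.mkQ_apply] using hφ
      have heq : ∀ w, adjOp G g w = l * g w := by
        intro w
        have hw : ψ (p w) = 0 := hψW _ (Submodule.subset_span ⟨w, rfl⟩)
        simp only [hp, map_sub, map_smul, map_sum, smul_eq_mul] at hw
        rw [adjOp]
        have : (∑ u ∈ G.neighborFinset w, g u) = ∑ u ∈ G.neighborFinset w, ψ (Finsupp.single u 1) := rfl
        rw [this, sub_eq_zero.mp hw]
      have hne : g ≠ 0 := fun h0 => hgv (by rw [h0]; rfl)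
      have hInf : (support g).Infinite := by
        by_contra hcon
        rw [Set.not_infinite] at hcon
        exact hgv (lemA G l v f hf g heq hcon)
      exact ⟨⟨g, ⟨hne, heq⟩, hInf⟩, fun _ => ⟨g, ⟨hne, heq⟩, hInf, Function.mem_support.mpr hgv⟩⟩
end

section
/- Let Γ be a locally finite simple graph, F a field and λ ∈ F. Suppose that for some vertex v ∉ S_{F,λ}(Γ) every (F,λ)-propagator of Γ with respect to v has finite support. Then for every vertex u ∉ S_{F,λ}(Γ), every (F,λ)-propagator of Γ with respect to u has finite support, and moreover any two (F,λ)-propagators of Γ with respect to the same vertex u ∉ S_{F,λ}(Γ) agree at every vertex of V(Γ) ∖ S_{F,λ}(Γ). -/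
open Function

section
open Finset
set_option linter.unusedSectionVars false
section aux
variable {V F : Type*} [DecidableEq V] (G : SimpleGraph V) [G.LocallyFinite] [Field F] [DecidableRel G.Adj] (l : F)

lemma adjOp_sub (f g : V → F) (w : V) : adjOp G (f - g) w = adjOp G f w - adjOp G g w := by
  simp [adjOp, Finset.sum_sub_distrib]

lemma adjOp_add (f g : V → F) (w : V) : adjOp G (f + g) w = adjOp G f w + adjOp G g w := by
  simp [adjOp, Finset.sum_add_distrib]

lemma sym_sum (f g : V → F) (s : Finset V) (hs : ∀ x, g x ≠ 0 → x ∈ s) :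
    ∑ x ∈ s ∪ s.biUnion (fun x => G.neighborFinset x), adjOp G f x * g x =
    ∑ x ∈ s ∪ s.biUnion (fun x => G.neighborFinset x), f x * adjOp G g x := by
  set t := s ∪ s.biUnion (fun x => G.neighborFinset x) with ht
  have hst : s ⊆ t := subset_union_left
  have hnb : ∀ x ∈ s, G.neighborFinset x ⊆ t := fun x hx =>
    (Finset.subset_biUnion_of_mem (fun x => G.neighborFinset x) hx).trans subset_union_right
  have step1 : ∀ x ∈ t, adjOp G f x * g x = ∑ y ∈ t, if G.Adj x y then f y * g x else 0 := by
    intro x hx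
    by_cases hgx : g x = 0
    · simp [hgx]
    · have hxs : x ∈ s := hs x hgx
      have hfe : t.filter (fun y => G.Adj x y) = G.neighborFinset x := by
        ext y
        simp only [mem_filter, SimpleGraph.mem_neighborFinset]
        exact ⟨fun h => h.2, fun h => ⟨hnb x hxs ((G.mem_neighborFinset x y).2 h), h⟩⟩
      rw [adjOp, Finset.sum_mul, ← hfe, Finset.sum_filter]
  have step2 : ∀ x ∈ t, f x * adjOp G g x = ∑ y ∈ t, if G.Adj x y then f x * g y else 0 := by
    intro x _
    rw [adjOp, Finset.mul_sum, ← Finset.sum_filter]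
    refine (Finset.sum_subset ?_ ?_).symm
    · intro y hy
      exact (G.mem_neighborFinset x y).2 (mem_filter.mp hy).2
    · intro y hy hy'
      have hyt : y ∉ t := fun h => hy' (mem_filter.mpr ⟨h, (G.mem_neighborFinset x y).mp hy⟩)
      have : g y = 0 := by
        by_contra hgy
        exact hyt (hst (hs y hgy))
      simp [this]
  rw [Finset.sum_congr rfl step1, Finset.sum_congr rfl step2, Finset.sum_comm]
  refine Finset.sum_congr rfl fun x _ => Finset.sum_congr rfl fun y _ => ?_
  by_cases h : G.Adj x y
  · rw [if_pos (G.adj_symm h), if_pos h]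
  · rw [if_neg (fun h' => h (G.adj_symm h')), if_neg h]

end aux

section aux2
variable {V F : Type*} [DecidableEq V] (G : SimpleGraph V) [G.LocallyFinite] [Field F]
  [DecidableRel G.Adj] (l : F)

/-- A kernel element with finite support vanishes at any vertex admitting a propagator. -/
lemma ker_vanish {h : V → F} (hker : ∀ w, adjOp G h w = l * h w)
    (hfin : (Function.support h).Finite) {u : V} {p : V → F} (hp : IsPropagator G l u p) :
    h u = 0 := by
  by_cases hu : h u = 0
  · exact hu
  exfalso
  set s := hfin.toFinset with hsdef
  have hs : ∀ x, h x ≠ 0 → x ∈ s := fun x hx => hfin.mem_toFinset.2 hx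
  set t := s ∪ s.biUnion (fun x => G.neighborFinset x) with htdef
  have hut : u ∈ t := Finset.mem_union_left _ (hs u hu)
  have e1 : ∑ x ∈ t, (adjOp G p x - l * p x) * h x = h u := by
    rw [Finset.sum_congr rfl (fun x _ => by rw [hp x])]
    rw [Finset.sum_congr rfl (fun x _ => by rw [ite_mul, one_mul, zero_mul])]
    rw [Finset.sum_ite_eq' t u h, if_pos hut]
  have e2 : ∑ x ∈ t, (adjOp G p x - l * p x) * h x = 0 := by
    have key := sym_sum G p h s hs
    simp only [sub_mul]
    rw [Finset.sum_sub_distrib, key]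
    have : ∀ x ∈ t, p x * adjOp G h x = l * p x * h x := fun x _ => by rw [hker x]; ring
    rw [Finset.sum_congr rfl this, sub_self]
  exact hu (by rw [← e1, e2])

/-- `(A - l)` as a linear map on finitely supported functions. -/
noncomputable def Lmap : (V →₀ F) →ₗ[F] (V →₀ F) :=
  Finsupp.lsum F fun w => LinearMap.toSpanSingleton F (V →₀ F)
    ((∑ x ∈ G.neighborFinset w, Finsupp.single x (1 : F)) - l • Finsupp.single w 1)

lemma Lmap_apply (g : V →₀ F) (x : V) :
    (Lmap G l g) x = adjOp G (g : V → F) x - l * g x := by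
  classical
  have expand : (Lmap G l g) x =
      ∑ w ∈ g.support, g w * ((((∑ y ∈ G.neighborFinset w, Finsupp.single y (1 : F))
        - l • Finsupp.single w 1 : V →₀ F)) x) := by
    rw [Lmap, Finsupp.lsum_apply, Finsupp.sum_apply]
    rw [Finsupp.sum]
    refine Finset.sum_congr rfl fun w _ => ?_
    simp [LinearMap.toSpanSingleton_apply]
  rw [expand]
  have ptws : ∀ w, ((((∑ y ∈ G.neighborFinset w, Finsupp.single y (1 : F))
      - l • Finsupp.single w 1 : V →₀ F)) x) =
      (if w ∈ G.neighborFinset x then (1 : F) else 0) - l * (if w = x then 1 else 0) := by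
    intro w
    rw [Finsupp.sub_apply, Finsupp.smul_apply, Finset.sum_apply']
    congr 1
    · rw [Finset.sum_congr rfl (fun y _ => Finsupp.single_apply)]
      rw [Finset.sum_ite_eq' (G.neighborFinset w) x (fun _ => (1:F))]
      have : x ∈ G.neighborFinset w ↔ w ∈ G.neighborFinset x := by
        simp [SimpleGraph.mem_neighborFinset, G.adj_comm]
      simp only [this]
    · rw [smul_eq_mul, Finsupp.single_apply]
  rw [Finset.sum_congr rfl (fun w _ => by rw [ptws w])]
  simp only [mul_sub]
  rw [Finset.sum_sub_distrib]
  congr 1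
  · rw [Finset.sum_congr rfl (fun w _ => by rw [mul_ite, mul_one, mul_zero])]
    rw [← Finset.sum_filter]
    rw [adjOp]
    refine Finset.sum_subset ?_ ?_
    · intro y hy
      exact (Finset.mem_filter.mp hy).2
    · intro y hy hy'
      have : y ∉ g.support := fun hys => hy' (Finset.mem_filter.mpr ⟨hys, hy⟩)
      simpa using Finsupp.notMem_support_iff.mp this
  · have hterm : ∀ w ∈ g.support, g w * (l * (if w = x then (1:F) else 0)) =
        (if w = x then g w * l else 0) := by
      intro w _; by_cases h : w = x <;> simp [h, mul_comm]
    rw [Finset.sum_congr rfl hterm, Finset.sum_ite_eq' g.support x (fun w => g w * l)]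
    by_cases hx : x ∈ g.support
    · rw [if_pos hx, mul_comm]
    · rw [if_neg hx, Finsupp.notMem_support_iff.mp hx, mul_zero]

end aux2

end

theorem stmt7 {V F : Type*} [DecidableEq V] (G : SimpleGraph V) [G.LocallyFinite] [Field F]
    (l : F) (v : V)
    (hv : ∃ f : V → F, IsPropagator G l v f)
    (hvfin : ∀ f : V → F, IsPropagator G l v f → (support f).Finite) :
    (∀ u : V, (∃ f : V → F, IsPropagator G l u f) →
      ∀ f : V → F, IsPropagator G l u f → (support f).Finite) ∧
    (∀ u : V, (∃ f : V → F, IsPropagator G l u f) →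
      ∀ p q : V → F, IsPropagator G l u p → IsPropagator G l u q →
        ∀ w : V, (∃ f : V → F, IsPropagator G l w f) → p w = q w) := by
  classical
  obtain ⟨f0, hf0⟩ := hv
  have kfin : ∀ h : V → F, (∀ w, adjOp G h w = l * h w) → (Function.support h).Finite := by
    intro h hker
    have hprop : IsPropagator G l v (f0 + h) := by
      intro w
      rw [adjOp_add G f0 h w, Pi.add_apply, hker w]
      have e : adjOp G f0 w + l * h w - l * (f0 w + h w) = adjOp G f0 w - l * f0 w := by ring
      rw [e, hf0 w]
    have h1 := hvfin _ hprop
    have h2 := hvfin _ hf0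
    refine (h1.union h2).subset ?_
    intro x hx
    by_cases hfx : f0 x + h x = 0
    · right
      rw [Function.mem_support]
      intro h0
      exact hx (by simpa [h0] using hfx)
    · left
      simpa [Function.mem_support] using hfx
  have KV : ∀ h : V → F, (∀ w, adjOp G h w = l * h w) → ∀ u : V,
      (∃ p : V → F, IsPropagator G l u p) → h u = 0 := by
    rintro h hker u ⟨p, hp⟩
    exact ker_vanish G l hker (kfin h hker) hp
  have exists_fin : ∀ u : V, (∃ p : V → F, IsPropagator G l u p) →
      ∃ g : V →₀ F, IsPropagator G l u (g : V → F) := by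
    rintro u ⟨p, hp⟩
    have hmem : Finsupp.single u (1 : F) ∈ LinearMap.range (Lmap G l) := by
      by_contra hnm
      obtain ⟨φ, hφu, hφ⟩ := Submodule.exists_dual_map_eq_bot_of_notMem hnm inferInstance
      set h : V → F := fun x => φ (Finsupp.single x 1) with hh
      have hker : ∀ w, adjOp G h w = l * h w := by
        intro w
        have hmem2 : Lmap G l (Finsupp.single w 1) ∈ LinearMap.range (Lmap G l) := ⟨_, rfl⟩
        have h0 : φ (Lmap G l (Finsupp.single w 1)) = 0 := by
          have h3 := Submodule.mem_map_of_mem (f := φ) hmem2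
          rw [hφ] at h3
          exact h3
        have hL : Lmap G l (Finsupp.single w 1) =
            (∑ x ∈ G.neighborFinset w, Finsupp.single x (1 : F)) - l • Finsupp.single w 1 := by
          rw [Lmap, Finsupp.lsum_single, LinearMap.toSpanSingleton_apply_one]
        rw [hL, map_sub, map_smul, map_sum] at h0
        have h4 : adjOp G h w - l * h w = 0 := by
          simpa [adjOp, hh, smul_eq_mul] using h0
        exact sub_eq_zero.mp h4
      exact hφu (KV h hker u ⟨p, hp⟩)
    obtain ⟨g, hg⟩ := hmem
    refine ⟨g, fun w => ?_⟩
    rw [← Lmap_apply, hg, Finsupp.single_apply]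
    rcases eq_or_ne w u with h | h
    · simp [h]
    · rw [if_neg h, if_neg (fun hh => h hh.symm)]
  constructor
  · rintro u hu f hf
    obtain ⟨g, hg⟩ := exists_fin u hu
    have hker2 : ∀ w, adjOp G (f - (g : V → F)) w = l * (f - (g : V → F)) w := by
      intro w
      rw [adjOp_sub, Pi.sub_apply]
      linear_combination (hf w) - (hg w)
    have hfin2 := kfin _ hker2
    refine (hfin2.union g.finite_support).subset ?_
    intro x hx
    by_cases hgx : g x = 0
    · left
      simp [Function.mem_support] at hx ⊢
      simpa [hgx] using hx
    · right
      simpa [Function.mem_support] using hgx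
  · rintro u _ p q hp hq w hw
    have hker : ∀ w', adjOp G (p - q) w' = l * (p - q) w' := by
      intro w'
      rw [adjOp_sub, Pi.sub_apply]
      linear_combination (hp w') - (hq w')
    have h0 : p w - q w = 0 := KV (p - q) hker w hw
    exact sub_eq_zero.mp h0
end

section
/- Let Γ be a locally finite simple graph, F a field and λ ∈ F. Then the following are equivalent: (i) A_{Γ,F} has no eigenfunction corresponding to λ with infinite support; (ii) for every f ∈ F^{V(Γ)} with infinite support, the function A_{Γ,F} f − λ·f also has infinite support; (iii) the set S_{F,λ}(Γ) is finite and, for every vertex v ∉ S_{F,λ}(Γ), every (F,λ)-propagator of Γ with respect to v has finite support. -/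
open Function

/-- The operator `f ↦ A f - l • f`. -/
def adjSub {V F : Type*} (G : SimpleGraph V) [G.LocallyFinite] [Field F]
    (l : F) (f : V → F) : V → F :=
  fun w => adjOp G f w - l * f w

section Aux

set_option linter.unusedSectionVars false

variable {V F : Type*} [DecidableEq V] (G : SimpleGraph V) [G.LocallyFinite] [Field F] (l : F)

/-- `adjSub` as a linear map. -/
noncomputable def TL : (V → F) →ₗ[F] (V → F) where
  toFun := adjSub G l
  map_add' f g := by
    funext w
    simp only [adjSub, adjOp, Pi.add_apply, Finset.sum_add_distrib]
    ring
  map_smul' c f := by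
    funext w
    simp only [adjSub, adjOp, Pi.smul_apply, smul_eq_mul, RingHom.id_apply]
    rw [mul_sub, Finset.mul_sum]
    ring

@[simp] lemma TL_apply (f : V → F) : TL G l f = adjSub G l f := rfl

noncomputable def tdelta (v : V) : V →₀ F :=
  (∑ u ∈ G.neighborFinset v, Finsupp.single u 1) - l • Finsupp.single v 1

noncomputable def T0 : (V →₀ F) →ₗ[F] (V →₀ F) := Finsupp.linearCombination F (tdelta G l)

lemma tdelta_apply (v w : V) :
    tdelta G l v w = (if w ∈ G.neighborFinset v then 1 else 0)
      - l * (if v = w then 1 else 0) := by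
  simp only [tdelta, Finsupp.sub_apply, Finsupp.smul_apply, Finsupp.finset_sum_apply,
    Finsupp.single_apply, smul_eq_mul]
  congr 1
  rw [Finset.sum_ite_eq' (G.neighborFinset v) w (fun _ => (1 : F))]

lemma T0_coe (k : V →₀ F) : ⇑(T0 G l k) = adjSub G l ⇑k := by
  classical
  funext w
  have h1 : T0 G l k = ∑ v ∈ k.support, k v • tdelta G l v := by
    rw [T0, Finsupp.linearCombination_apply, Finsupp.sum]
  rw [h1, Finsupp.finset_sum_apply]
  simp only [Finsupp.smul_apply, tdelta_apply, smul_eq_mul]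
  have h2 : ∀ v ∈ k.support,
      k v * ((if w ∈ G.neighborFinset v then 1 else 0) - l * (if v = w then 1 else 0))
      = (if v ∈ G.neighborFinset w then k v else 0) - l * (if v = w then k v else 0) := by
    intro v _
    have hmem : w ∈ G.neighborFinset v ↔ v ∈ G.neighborFinset w := by
      simp [SimpleGraph.mem_neighborFinset, G.adj_comm]
    simp only [hmem]
    by_cases h : v ∈ G.neighborFinset w <;> by_cases h' : v = w <;> simp [h, h', mul_comm]
  rw [Finset.sum_congr rfl h2, Finset.sum_sub_distrib]
  have h3 : ∑ v ∈ k.support, (if v ∈ G.neighborFinset w then k v else 0)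
      = ∑ u ∈ G.neighborFinset w, k u := by
    rw [Finset.sum_ite_mem]
    refine Finset.sum_subset Finset.inter_subset_right ?_
    intro x hxt hx
    have hxs : x ∉ k.support := fun hxs => hx (Finset.mem_inter.mpr ⟨hxs, hxt⟩)
    exact Finsupp.notMem_support_iff.mp hxs
  have h4 : ∑ v ∈ k.support, l * (if v = w then k v else 0) = l * k w := by
    rw [← Finset.mul_sum, Finset.sum_ite_eq' k.support w]
    by_cases h : w ∈ k.support
    · simp [h]
    · simp [h, Finsupp.notMem_support_iff.mp h]
  rw [h3, h4]
  rfl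

lemma SYM (f : V → F) (k : V →₀ F) :
    Finsupp.linearCombination F (adjSub G l f) k = Finsupp.linearCombination F f (T0 G l k) := by
  have h : Finsupp.linearCombination F (adjSub G l f)
      = (Finsupp.linearCombination F f).comp (T0 G l) := by
    apply Finsupp.lhom_ext
    intro v c
    rw [Finsupp.linearCombination_single, LinearMap.comp_apply]
    have h1 : T0 G l (Finsupp.single v c) = c • tdelta G l v := by
      rw [T0, Finsupp.linearCombination_single]
    rw [h1, map_smul]
    have h2 : Finsupp.linearCombination F f (tdelta G l v) = adjSub G l f v := by
      rw [tdelta, map_sub, map_smul, map_sum, Finsupp.linearCombination_single]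
      simp only [Finsupp.linearCombination_single, one_smul, smul_eq_mul]
      simp [adjSub, adjOp]
    rw [h2]
  rw [h, LinearMap.comp_apply]

lemma pair_swap (a b : V →₀ F) :
    Finsupp.linearCombination F (⇑a) b = Finsupp.linearCombination F (⇑b) a := by
  classical
  rw [Finsupp.linearCombination_apply, Finsupp.linearCombination_apply, Finsupp.sum, Finsupp.sum]
  have h1 : ∑ v ∈ b.support, b v • a v = ∑ v ∈ a.support ∪ b.support, b v • a v := by
    refine Finset.sum_subset Finset.subset_union_right ?_
    intro x _ hx
    rw [Finsupp.notMem_support_iff.mp hx, zero_smul]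
  have h2 : ∑ v ∈ a.support, a v • b v = ∑ v ∈ a.support ∪ b.support, a v • b v := by
    refine Finset.sum_subset Finset.subset_union_left ?_
    intro x _ hx
    rw [Finsupp.notMem_support_iff.mp hx, zero_smul]
  rw [h1, h2]
  exact Finset.sum_congr rfl fun v _ => by rw [smul_eq_mul, smul_eq_mul, mul_comm]

end Aux

section Aux2
set_option linter.unusedSectionVars false
variable {V F : Type*} [DecidableEq V] (G : SimpleGraph V) [G.LocallyFinite] [Field F] (l : F)

lemma range_lemma (g : V →₀ F)
    (hg : ∀ x : V → F, adjSub G l x = 0 → Finsupp.linearCombination F x g = 0) :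
    ∃ y : V →₀ F, T0 G l y = g := by
  by_contra hcon
  push_neg at hcon
  have hgW : g ∉ LinearMap.range (T0 G l) := by
    intro h
    obtain ⟨y, hy⟩ := h
    exact hcon y hy
  set W := LinearMap.range (T0 G l) with hW
  have hmk : W.mkQ g ≠ 0 := by
    rw [Submodule.mkQ_apply, ne_eq, Submodule.Quotient.mk_eq_zero]
    exact hgW
  obtain ⟨ψ, hψ⟩ : ∃ ψ : Module.Dual F ((V →₀ F) ⧸ W), ψ (W.mkQ g) ≠ 0 := by
    by_contra h
    push_neg at h
    exact hmk ((Module.forall_dual_apply_eq_zero_iff F _).mp h)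
  set φ : (V →₀ F) →ₗ[F] F := ψ.comp W.mkQ with hφ
  have hφW : ∀ z : V →₀ F, φ (T0 G l z) = 0 := by
    intro z
    have h0 : W.mkQ (T0 G l z) = 0 := by
      rw [Submodule.mkQ_apply, Submodule.Quotient.mk_eq_zero]
      exact ⟨z, rfl⟩
    rw [hφ, LinearMap.comp_apply, h0, map_zero]
  set x : V → F := fun v => φ (Finsupp.single v 1) with hx
  have hxker : adjSub G l x = 0 := by
    funext w
    have h1 : adjSub G l x w = φ (tdelta G l w) := by
      rw [tdelta, map_sub, map_smul, map_sum]
      simp only [adjSub, adjOp, hx, smul_eq_mul]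
    have h2 : tdelta G l w = T0 G l (Finsupp.single w 1) := by
      rw [T0, Finsupp.linearCombination_single, one_smul]
    rw [h1, h2, hφW]
    rfl
  have h2 : Finsupp.linearCombination F x g = φ g := by
    conv_rhs => rw [← Finsupp.sum_single g]
    rw [Finsupp.linearCombination_apply, Finsupp.sum, Finsupp.sum, map_sum]
    refine Finset.sum_congr rfl fun v _ => ?_
    have h3 : Finsupp.single v (g v) = g v • Finsupp.single v (1 : F) := by
      rw [Finsupp.smul_single, smul_eq_mul, mul_one]
    rw [h3, map_smul]
  have h4 := hg x hxker
  rw [h2] at h4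
  exact hψ (by rw [hφ, LinearMap.comp_apply] at h4; exact h4)

end Aux2

section Aux3
set_option linter.unusedSectionVars false
variable {V F : Type*} [DecidableEq V] (G : SimpleGraph V) [G.LocallyFinite] [Field F] (l : F)

lemma adjSub_local (a b : V → F) (w : V) (h : ∀ u ∈ insert w (G.neighborFinset w), a u = b u) :
    adjSub G l a w = adjSub G l b w := by
  simp only [adjSub, adjOp]
  rw [h w (Finset.mem_insert_self _ _),
    Finset.sum_congr rfl fun u hu => h u (Finset.mem_insert_of_mem hu)]

lemma exists_inf_support_ker
    (hker : ∀ x : V → F, adjSub G l x = 0 → (support x).Finite)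
    (hstep : ∀ U : Set V, U.Finite →
      ∃ x : V → F, adjSub G l x = 0 ∧ x ≠ 0 ∧ ∀ v ∈ U, x v = 0) :
    ∃ x : V → F, adjSub G l x = 0 ∧ (support x).Infinite := by
  classical
  let pick : {U : Set V // U.Finite} → (V → F) := fun U => (hstep U.1 U.2).choose
  have hpick1 : ∀ U, adjSub G l (pick U) = 0 := fun U => (hstep U.1 U.2).choose_spec.1
  have hpick2 : ∀ U, pick U ≠ 0 := fun U => (hstep U.1 U.2).choose_spec.2.1
  have hpick3 : ∀ U, ∀ v ∈ U.1, pick U v = 0 := fun U => (hstep U.1 U.2).choose_spec.2.2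
  let next : {U : Set V // U.Finite} → {U : Set V // U.Finite} := fun U =>
    ⟨U.1 ∪ support (pick U), U.2.union (hker _ (hpick1 U))⟩
  let c : ℕ → {U : Set V // U.Finite} := fun n => next^[n] ⟨∅, Set.finite_empty⟩
  let g : ℕ → (V → F) := fun n => pick (c n)
  have hc_succ : ∀ n, c (n + 1) = next (c n) := fun n => Function.iterate_succ_apply' _ _ _
  have hg_ker : ∀ n, adjSub G l (g n) = 0 := fun n => hpick1 _
  have hg_ne : ∀ n, g n ≠ 0 := fun n => hpick2 _
  have hg_supp : ∀ n, support (g n) ⊆ (c (n + 1)).1 := by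
    intro n
    rw [hc_succ n]
    exact Set.subset_union_right
  have hg_van : ∀ n, ∀ v ∈ (c n).1, g n v = 0 := fun n => hpick3 _
  have hc_mono : ∀ m n, m ≤ n → (c m).1 ⊆ (c n).1 := by
    intro m n h
    induction n with
    | zero => rw [Nat.le_zero.mp h]
    | succ k ih =>
      rcases Nat.le_succ_iff.mp h with h' | h'
      · refine (ih h').trans ?_
        rw [hc_succ k]
        exact Set.subset_union_left
      · rw [h']
  have hdisj : ∀ m n, m < n → ∀ v, g m v ≠ 0 → g n v = 0 := by
    intro m n h v hv
    exact hg_van n v (hc_mono (m + 1) n h (hg_supp m hv))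
  have huniq : ∀ m n v, g m v ≠ 0 → g n v ≠ 0 → m = n := by
    intro m n v h1 h2
    rcases lt_trichotomy m n with h | h | h
    · exact absurd (hdisj m n h v h1) h2
    · exact h
    · exact absurd (hdisj n m h v h2) h1
  let x : V → F := fun v => if h : ∃ n, g n v ≠ 0 then g h.choose v else 0
  have hx_eq : ∀ n v, g n v ≠ 0 → x v = g n v := by
    intro n v h
    have hex : ∃ m, g m v ≠ 0 := ⟨n, h⟩
    have h2 := hex.choose_spec
    show (if h : ∃ n, g n v ≠ 0 then g h.choose v else 0) = g n v
    rw [dif_pos hex, huniq _ _ _ h2 h]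
  have hx_zero : ∀ v, (∀ n, g n v = 0) → x v = 0 := by
    intro v h
    show (if h : ∃ n, g n v ≠ 0 then g h.choose v else 0) = 0
    rw [dif_neg]
    push_neg
    exact h
  have hxker : adjSub G l x = 0 := by
    funext w
    set Nw : Finset V := insert w (G.neighborFinset w) with hNw
    have hIfin : {n : ℕ | ∃ u ∈ Nw, g n u ≠ 0}.Finite := by
      have hsub : {n : ℕ | ∃ u ∈ Nw, g n u ≠ 0} ⊆ ⋃ u ∈ (Nw : Set V), {n : ℕ | g n u ≠ 0} := by
        intro n hn
        obtain ⟨u, hu1, hu2⟩ := hn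
        exact Set.mem_biUnion hu1 hu2
      refine Set.Finite.subset (Set.Finite.biUnion Nw.finite_toSet fun u _ => ?_) hsub
      exact Set.Subsingleton.finite fun m hm n hn => huniq m n u hm hn
    set y : V → F := ∑ n ∈ hIfin.toFinset, g n with hy
    have hyker : adjSub G l y = 0 := by
      have : TL G l y = ∑ n ∈ hIfin.toFinset, TL G l (g n) := map_sum _ _ _
      rw [TL_apply] at this
      rw [this]
      simp only [TL_apply]
      rw [Finset.sum_congr rfl fun n _ => hg_ker n]
      simp
    have hagree : ∀ u ∈ Nw, x u = y u := by
      intro u hu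
      by_cases hex : ∃ n, g n u ≠ 0
      · obtain ⟨n₀, hn₀⟩ := hex
        have hmem : n₀ ∈ hIfin.toFinset := by
          rw [Set.Finite.mem_toFinset]
          exact ⟨u, hu, hn₀⟩
        rw [hx_eq n₀ u hn₀, hy]
        rw [Finset.sum_apply]
        rw [Finset.sum_eq_single_of_mem n₀ hmem]
        intro b _ hb
        by_contra hb0
        exact hb (huniq b n₀ u hb0 hn₀)
      · push_neg at hex
        rw [hx_zero u hex, hy, Finset.sum_apply]
        rw [Finset.sum_congr rfl fun n _ => hex n]
        simp
    rw [adjSub_local G l x y w hagree, hyker]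
  have hv : ∀ n, ∃ v, g n v ≠ 0 := by
    intro n
    have := hg_ne n
    rwa [Function.ne_iff] at this
  choose vf hvf using hv
  have hmem : ∀ n, vf n ∈ support x := by
    intro n
    rw [mem_support, hx_eq n _ (hvf n)]
    exact hvf n
  have hinj : Function.Injective vf := fun m n h => huniq m n (vf n) (h ▸ hvf m) (hvf n)
  exact ⟨x, hxker, Set.infinite_of_injective_forall_mem hinj hmem⟩

lemma supp_ker_finite (hker : ∀ x : V → F, adjSub G l x = 0 → (support x).Finite) :
    {v : V | ∃ x : V → F, adjSub G l x = 0 ∧ x v ≠ 0}.Finite := by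
  by_contra hinf
  have hstep : ∀ U : Set V, U.Finite →
      ∃ x : V → F, adjSub G l x = 0 ∧ x ≠ 0 ∧ ∀ v ∈ U, x v = 0 := by
    by_contra hstep
    push_neg at hstep
    obtain ⟨U, hUfin, hU⟩ := hstep
    apply hinf
    haveI := hUfin.fintype
    set K := LinearMap.ker (TL G l) with hK
    let ρ : K →ₗ[F] (U → F) := (LinearMap.funLeft F F (Subtype.val : U → V)).comp K.subtype
    have hρ : Function.Injective ρ := by
      rw [injective_iff_map_eq_zero]
      rintro ⟨a, ha⟩ h0
      have ha' : adjSub G l a = 0 := ha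
      have haU : ∀ v ∈ U, a v = 0 := by
        intro v hv
        exact congrFun h0 ⟨v, hv⟩
      have haz : a = 0 := by
        by_contra h'
        obtain ⟨u, hu1, hu2⟩ := hU a ha' h'
        exact hu2 (haU u hu1)
      exact Subtype.ext haz
    haveI : Module.Finite F K := Module.Finite.of_injective ρ hρ
    obtain ⟨n, b, hb⟩ := Module.Finite.exists_fin (R := F) (M := K)
    refine Set.Finite.subset (Set.finite_iUnion fun i : Fin n => hker (b i).1 (b i).2) ?_
    intro v hv
    obtain ⟨a, ha, hav⟩ := hv
    have haK : (⟨a, ha⟩ : K) ∈ Submodule.span F (Set.range b) := by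
      rw [hb]
      trivial
    rw [Submodule.mem_span_range_iff_exists_fun] at haK
    obtain ⟨cf, hcf⟩ := haK
    have hval : a v = ∑ i, cf i * (b i).1 v := by
      have := congrArg (fun z : K => (z : V → F) v) hcf
      simpa using this.symm
    rw [Set.mem_iUnion]
    by_contra hall
    push_neg at hall
    apply hav
    rw [hval, Finset.sum_eq_zero]
    intro i _
    have : (b i).1 v = 0 := by
      have := hall i
      rw [mem_support, not_not] at this
      exact this
    rw [this, mul_zero]
  obtain ⟨x, hx1, hx2⟩ := exists_inf_support_ker G l hker hstep
  exact hx2 (hker x hx1)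

end Aux3

theorem stmt9 {V F : Type*} [DecidableEq V] (G : SimpleGraph V) [G.LocallyFinite] [Field F]
    (l : F) :
    [ ¬ ∃ f : V → F, IsEigenfun G l f ∧ (support f).Infinite,
      ∀ f : V → F, (support f).Infinite → (support (adjSub G l f)).Infinite,
      {v : V | ¬ ∃ f : V → F, IsPropagator G l v f}.Finite ∧
        ∀ v : V, (∃ f : V → F, IsPropagator G l v f) →
          ∀ f : V → F, IsPropagator G l v f → (support f).Finite ].TFAE := by
  tfae_have 1 → 2 := by
    intro h1 f hf
    have hker : ∀ x : V → F, adjSub G l x = 0 → (support x).Finite := by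
      intro x hx
      by_contra hfin
      apply h1
      refine ⟨x, ⟨?_, ?_⟩, hfin⟩
      · intro h0
        apply hfin
        rw [h0]
        simp
      · intro w
        have h2 := congrFun hx w
        simp only [adjSub, Pi.zero_apply] at h2
        exact sub_eq_zero.mp h2
    by_contra hcon
    rw [Set.not_infinite] at hcon
    set g : V →₀ F := Finsupp.ofSupportFinite (adjSub G l f) hcon with hgdef
    have hgcoe : ⇑g = adjSub G l f := Finsupp.ofSupportFinite_coe
    have hg : ∀ x : V → F, adjSub G l x = 0 → Finsupp.linearCombination F x g = 0 := by
      intro x hx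
      have hxfin := hker x hx
      set x0 := Finsupp.ofSupportFinite x hxfin with hx0
      have hx0coe : ⇑x0 = x := Finsupp.ofSupportFinite_coe
      have hswap : Finsupp.linearCombination F x g = Finsupp.linearCombination F (⇑g) x0 := by
        rw [← hx0coe]
        exact pair_swap x0 g
      rw [hswap, hgcoe, SYM]
      have hT0 : T0 G l x0 = 0 := by
        apply DFunLike.coe_injective
        show ⇑(T0 G l x0) = ⇑(0 : V →₀ F)
        rw [T0_coe, hx0coe, hx, Finsupp.coe_zero]
      rw [hT0, map_zero]
    obtain ⟨y, hy⟩ := range_lemma G l g hg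
    have hyadj : adjSub G l ⇑y = adjSub G l f := by
      rw [← T0_coe, hy, hgcoe]
    have hker2 : adjSub G l (f - ⇑y) = 0 := by
      have h3 := map_sub (TL G l) f ⇑y
      rw [TL_apply, TL_apply, TL_apply, hyadj] at h3
      rw [h3, sub_self]
    have hfin2 := hker _ hker2
    have hfe : f = (f - ⇑y) + ⇑y := (sub_add_cancel f ⇑y).symm
    have hsf : (support f).Finite := by
      rw [hfe]
      exact Set.Finite.subset (hfin2.union y.finite_support) (Function.support_add _ _)
    exact hf hsf
  tfae_have 2 → 1 := by
    intro h2
    rintro ⟨f, ⟨hne, heig⟩, hinf⟩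
    have hker0 : adjSub G l f = 0 := by
      funext w
      simp only [adjSub, Pi.zero_apply]
      rw [heig w, sub_self]
    have := h2 f hinf
    rw [hker0] at this
    exact this (by simp)
  tfae_have 2 → 3 := by
    intro h2
    have hker : ∀ x : V → F, adjSub G l x = 0 → (support x).Finite := by
      intro x hx
      by_contra h
      have := h2 x h
      rw [hx] at this
      exact this (by simp)
    constructor
    · refine Set.Finite.subset (supp_ker_finite G l hker) ?_
      intro v hv
      by_contra hvk
      apply hv
      have hvk' : ∀ x : V → F, adjSub G l x = 0 → x v = 0 := by
        intro x hx
        by_contra h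
        exact hvk ⟨x, hx, h⟩
      obtain ⟨y, hy⟩ := range_lemma G l (Finsupp.single v 1) (by
        intro x hx
        rw [Finsupp.linearCombination_single, hvk' x hx, smul_zero])
      refine ⟨⇑y, fun w => ?_⟩
      have hcoe : adjSub G l ⇑y w = (Finsupp.single v (1 : F)) w := by
        rw [← T0_coe, hy]
      rw [show adjOp G ⇑y w - l * y w = adjSub G l ⇑y w from rfl, hcoe, Finsupp.single_apply]
      simp [eq_comm]
    · intro v _ f hf
      by_contra h
      have hinf := h2 f h
      have hsub : support (adjSub G l f) ⊆ {v} := by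
        intro w hw
        rw [mem_support] at hw
        by_contra hwv
        apply hw
        rw [show adjSub G l f w = _ from hf w, if_neg (by simpa using hwv)]
      exact (Set.finite_singleton v).not_infinite (hinf.mono hsub)
  tfae_have 3 → 1 := by
    rintro ⟨hS, hprop⟩
    rintro ⟨f, ⟨hne, heig⟩, hinf⟩
    have hker0 : adjSub G l f = 0 := by
      funext w
      simp only [adjSub, Pi.zero_apply]
      rw [heig w, sub_self]
    obtain ⟨v, hv1, hv2⟩ := (hinf.diff hS).nonempty
    rw [Set.mem_setOf_eq, not_not] at hv2
    obtain ⟨p, hp⟩ := hv2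
    have hpf : (support p).Finite := hprop v ⟨p, hp⟩ p hp
    set p0 := Finsupp.ofSupportFinite p hpf with hp0
    have hp0coe : ⇑p0 = p := Finsupp.ofSupportFinite_coe
    have hT0p : T0 G l p0 = Finsupp.single v 1 := by
      apply DFunLike.coe_injective
      show ⇑(T0 G l p0) = ⇑(Finsupp.single v (1 : F))
      rw [T0_coe, hp0coe]
      funext w
      rw [show adjSub G l p w = _ from hp w, Finsupp.single_apply]
      simp [eq_comm]
    have hsym := SYM G l f p0
    rw [hker0, hT0p, Finsupp.linearCombination_single, one_smul] at hsym
    have hL : Finsupp.linearCombination F (0 : V → F) p0 = 0 := by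
      rw [Finsupp.linearCombination_apply, Finsupp.sum]
      simp
    rw [hL] at hsym
    exact hv1 hsym.symm
  tfae_finish
end

section
/- Let Γ be an infinite, locally finite, connected simple graph, let F be a field of characteristic 0, and let λ ∈ F be transcendental over the prime subfield ℚ of F. Then λ is an eigenvalue of the adjacency operator A_{Γ,F}: there exists a nonzero function f : V(Γ) → F such that for every vertex w, ∑_{u adjacent to w} f(u) = λ·f(w). -/
open Function

open Polynomial


section Basic
variable {V : Type*} (G : SimpleGraph V) [G.LocallyFinite]

lemma adjOp_map {E E' : Type*} [Field E] [Field E'] (σ : E →+* E') (c : V → E) (w : V) :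
    σ (adjOp G c w) = adjOp G (fun u => σ (c u)) w := by
  simp [adjOp, map_sum σ _ _]

variable [DecidableEq V] [DecidableRel G.Adj]

lemma adjOp_restrict {E : Type*} [Field E] (S : Finset V) (c : V → E)
    (hc : ∀ u ∉ S, c u = 0) (w : V) :
    adjOp G c w = ∑ j ∈ S.attach, (if G.Adj w j then (1:E) else 0) * c j := by
  rw [Finset.sum_attach S (fun j => (if G.Adj w j then (1:E) else 0) * c j)]
  simp only [ite_mul, one_mul, zero_mul, ← Finset.sum_filter]
  rw [adjOp]
  rw [← Finset.sum_filter_of_ne (f := c) (p := (· ∈ S)) (by intro x hx hne; by_contra h; exact hne (hc x h))]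
  apply Finset.sum_congr _ (fun _ _ => rfl)
  ext u
  simp [SimpleGraph.mem_neighborFinset, and_comm, G.adj_comm]
end Basic



section Pairing
variable {V : Type*} (G : SimpleGraph V) [G.LocallyFinite] [DecidableEq V] [DecidableRel G.Adj]
variable {E : Type*} [Field E]

lemma pairing (t : E) (a b : V → E) (s : Finset V)
    (h1 : ∀ u ∉ s, a u = 0) (h2 : ∀ u, a u ≠ 0 → G.neighborFinset u ⊆ s) :
    ∑ u ∈ s, a u * (adjOp G b u - t * b u) = ∑ u ∈ s, b u * (adjOp G a u - t * a u) := by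
  have key : ∑ u ∈ s, a u * adjOp G b u = ∑ u ∈ s, b u * adjOp G a u := by
    have lhs : ∑ u ∈ s, a u * adjOp G b u
        = ∑ u ∈ s, ∑ w ∈ s, if G.Adj u w then a u * b w else 0 := by
      refine Finset.sum_congr rfl fun u _ => ?_
      rw [← Finset.sum_filter]
      rcases eq_or_ne (a u) 0 with h | h
      · simp [h]
      · have : s.filter (fun w => G.Adj u w) = G.neighborFinset u := by
          ext w
          simp only [Finset.mem_filter, SimpleGraph.mem_neighborFinset]
          exact ⟨fun h => h.2, fun hw => ⟨h2 u h (by simpa [SimpleGraph.mem_neighborFinset] using hw), hw⟩⟩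
        rw [this, adjOp, Finset.mul_sum]
    have rhs : ∑ u ∈ s, b u * adjOp G a u
        = ∑ u ∈ s, ∑ w ∈ s, if G.Adj u w then b u * a w else 0 := by
      refine Finset.sum_congr rfl fun u _ => ?_
      rw [← Finset.sum_filter, adjOp, Finset.mul_sum]
      rw [← Finset.sum_filter_of_ne (f := fun w => b u * a w) (p := (· ∈ s))
        (by intro x hx hne; by_contra h; exact hne (by show b u * a x = 0; rw [h1 x h, mul_zero]))]
      refine Finset.sum_congr ?_ fun _ _ => rfl
      ext w
      simp only [Finset.mem_filter, SimpleGraph.mem_neighborFinset]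
      exact ⟨fun h => ⟨h.2, h.1⟩, fun h => ⟨h.2, h.1⟩⟩
    rw [lhs, rhs, Finset.sum_comm]
    refine Finset.sum_congr rfl fun u hu => Finset.sum_congr rfl fun w hw => ?_
    rcases Classical.em (G.Adj u w) with h | h
    · simp [h, (G.adj_comm u w).mp h, mul_comm]
    · have h' : ¬ G.Adj w u := fun hh => h ((G.adj_comm w u).mp hh)
      simp [h, h']
  simp only [mul_sub]
  rw [Finset.sum_sub_distrib, Finset.sum_sub_distrib, key]
  congr 1
  refine Finset.sum_congr rfl fun u _ => ?_
  ring
end Pairing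



section Duality
variable {V : Type*} (G : SimpleGraph V) [G.LocallyFinite] [DecidableEq V] [DecidableRel G.Adj]
variable {F : Type*} [Field F]

lemma exists_finsupp_propagator (l : F)
    (hno : ∀ f : V → F, (∀ w, adjOp G f w = l * f w) → f = 0) (v : V) :
    ∃ (c : V → F) (s : Finset V), (∀ u ∉ s, c u = 0) ∧
      (∀ w, adjOp G c w - l * c w = if w = v then 1 else 0) := by
  classical
  set row : V → (V →₀ F) := fun w =>
    (∑ u ∈ G.neighborFinset w, Finsupp.single u (1:F)) - l • Finsupp.single w 1 with hrow
  have hrow_apply : ∀ w u, row w u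
      = (if G.Adj w u then (1:F) else 0) - l * (if w = u then 1 else 0) := by
    intro w u
    simp only [hrow, Finsupp.sub_apply, Finsupp.smul_apply, Finsupp.finset_sum_apply,
      Finsupp.single_apply, smul_eq_mul]
    congr 2
    rw [Finset.sum_ite_eq' (G.neighborFinset w) u (fun _ => (1:F))]
    simp [SimpleGraph.mem_neighborFinset, G.adj_comm]
  by_cases hv : Finsupp.single v (1:F) ∈ Submodule.span F (Set.range row)
  · rw [Finsupp.mem_span_range_iff_exists_finsupp] at hv
    obtain ⟨d, hd⟩ := hv
    refine ⟨fun u => d u, d.support, fun u hu => Finsupp.notMem_support_iff.mp hu, fun w => ?_⟩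
    have h2 := congrArg (fun f : V →₀ F => f w) hd
    simp only [Finsupp.sum_apply] at h2
    rw [Finsupp.sum] at h2
    simp only [Finsupp.smul_apply, smul_eq_mul, Finsupp.single_apply] at h2
    calc adjOp G (fun u => d u) w - l * d w
        = ∑ x ∈ d.support, d x * row x w := ?_
      _ = if v = w then 1 else 0 := h2
      _ = if w = v then 1 else 0 := by
            rcases eq_or_ne w v with h | h
            · simp [h]
            · simp [h, Ne.symm h]
    · simp only [hrow_apply, mul_sub]
      rw [Finset.sum_sub_distrib]
      congr 1
      · simp only [mul_ite, mul_one, mul_zero]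
        rw [← Finset.sum_filter (fun x => G.Adj x w) (fun x => d x)]
        rw [adjOp]
        rw [← Finset.sum_filter_of_ne (f := fun u => d u) (p := (· ∈ d.support))
          (by intro x hx hne; exact Finsupp.mem_support_iff.mpr hne)]
        refine Finset.sum_congr ?_ fun _ _ => rfl
        ext x
        simp only [Finset.mem_filter, SimpleGraph.mem_neighborFinset]
        constructor
        · exact fun h => ⟨h.2, (G.adj_comm x w).mpr h.1⟩
        · exact fun h => ⟨(G.adj_comm x w).mp h.2, h.1⟩
      · have hterm : ∀ x ∈ d.support, d x * (l * if x = w then 1 else 0)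
            = if x = w then l * d x else 0 := by
          intro x _
          rcases eq_or_ne x w with h | h <;> simp [h, mul_comm]
        rw [Finset.sum_congr rfl hterm, Finset.sum_ite_eq' d.support w (fun x => l * d x)]
        by_cases hw : w ∈ d.support
        · simp [hw]
        · simp [hw, Finsupp.notMem_support_iff.mp hw]
  · exfalso
    set R := Submodule.span F (Set.range row) with hR
    have hq : R.mkQ (Finsupp.single v 1) ≠ 0 := by
      rw [Submodule.mkQ_apply]
      exact fun h => hv ((Submodule.Quotient.mk_eq_zero R).mp h)
    have : ¬ ∀ φ : Module.Dual F ((V →₀ F) ⧸ R), φ (R.mkQ (Finsupp.single v 1)) = 0 := by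
      rw [Module.forall_dual_apply_eq_zero_iff]
      exact hq
    push_neg at this
    obtain ⟨φ, hφ⟩ := this
    set f : V → F := fun u => φ (R.mkQ (Finsupp.single u 1)) with hf
    have heig : ∀ w, adjOp G f w = l * f w := by
      intro w
      have hrw : φ (R.mkQ (row w)) = 0 := by
        have : row w ∈ R := Submodule.subset_span ⟨w, rfl⟩
        rw [Submodule.mkQ_apply, (Submodule.Quotient.mk_eq_zero R).mpr this, map_zero]
      have expand : φ (R.mkQ (row w)) = adjOp G f w - l * f w := by
        rw [hrow]
        simp only [map_sub, map_smul, map_sum, smul_eq_mul]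
        rfl
      rw [expand] at hrw
      exact sub_eq_zero.mp hrw
    have := hno f heig
    rw [hf] at this
    exact hφ (by simpa using congrFun this v)
end Duality





lemma rowsum {V : Type*} (G : SimpleGraph V) [G.LocallyFinite] [DecidableEq V]
    [DecidableRel G.Adj] (S : Finset V) {E : Type*} [Field E] (t : E) (c' : V → E)
    (hc' : ∀ u ∉ S, c' u = 0) (i : {x // x ∈ S}) :
    ∑ j : {x // x ∈ S},
      ((if G.Adj i.1 j.1 then (1:E) else 0) - t * (if i = j then 1 else 0)) * c' j.1
      = adjOp G c' i.1 - t * c' i.1 := by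
  simp only [sub_mul, Finset.sum_sub_distrib]
  congr 1
  · rw [adjOp_restrict G S c' hc' i.1, Finset.univ_eq_attach]
  · have h1 : ∀ j : {x // x ∈ S}, (t * if i = j then 1 else 0) * c' j.1
        = if i = j then t * c' j.1 else 0 := by
      intro j
      rcases eq_or_ne i j with h | h <;> simp [h]
    rw [Finset.sum_congr rfl (fun j _ => h1 j),
      Finset.sum_ite_eq Finset.univ i (fun j => t * c' j.1)]
    simp

section Matrix
variable {V : Type*} (G : SimpleGraph V) [G.LocallyFinite] [DecidableEq V] [DecidableRel G.Adj]
variable {F : Type*} [Field F] [CharZero F]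

local notation "K" => FractionRing (Polynomial ℚ)

lemma exists_propagator_overK (l : F)
    (hinj : Function.Injective (Polynomial.eval₂RingHom (Rat.castHom F) l))
    (v : V) (c : V → F) (s : Finset V) (hs : ∀ u ∉ s, c u = 0)
    (hp : ∀ w, adjOp G c w - l * c w = if w = v then 1 else 0) :
    ∃ (c' : V → K) (s' : Finset V), (∀ u ∉ s', c' u = 0) ∧
      (∀ w, adjOp G c' w - (algebraMap (Polynomial ℚ) K X) * c' w
        = if w = v then 1 else 0) := by
  classical
  set ψ : Polynomial ℚ →+* F := Polynomial.eval₂RingHom (Rat.castHom F) l with hψ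
  set ρ : Polynomial ℚ →+* K := algebraMap (Polynomial ℚ) K with hρ
  set σ : K →+* F := IsFractionRing.lift hinj with hσ
  have hσρ : ∀ p, σ (ρ p) = ψ p := fun p => IsFractionRing.lift_algebraMap hinj p
  set S : Finset V := insert v s with hS
  have hvS : v ∈ S := Finset.mem_insert_self v s
  have hcS : ∀ u ∉ S, c u = 0 := fun u hu => hs u (fun h => hu (Finset.mem_insert_of_mem h))
  set ι := {x // x ∈ S}
  set NP : Matrix ι ι (Polynomial ℚ) := Matrix.of fun i j =>
    (if G.Adj i.1 j.1 then 1 else 0) - X * (if i = j then 1 else 0) with hNP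
  set Aq : Matrix ι ι ℚ := Matrix.of fun i j => if G.Adj i.1 j.1 then 1 else 0 with hAq
  -- NP = - charmatrix Aq
  have hNPc : NP = -(Matrix.charmatrix Aq) := by
    refine Matrix.ext fun i j => ?_
    rw [Matrix.neg_apply, Matrix.charmatrix_apply]
    simp only [hNP, hAq, Matrix.of_apply, Matrix.diagonal_apply]
    rcases eq_or_ne i j with h | h
    · subst h
      simp [apply_ite (C : ℚ → Polynomial ℚ)]
    · simp [h, apply_ite (C : ℚ → Polynomial ℚ)]
  have hdetNP : NP.det ≠ 0 := by
    rw [hNPc, Matrix.det_neg]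
    refine mul_ne_zero (pow_ne_zero _ (neg_ne_zero.mpr one_ne_zero)) ?_
    exact (Matrix.charpoly_monic Aq).ne_zero
  set MF : Matrix ι ι F := NP.map ψ with hMF
  have hMFapply : ∀ i j : ι, MF i j
      = (if G.Adj i.1 j.1 then (1:F) else 0) - l * (if i = j then 1 else 0) := by
    intro i j
    simp only [hMF, Matrix.map_apply, hNP, Matrix.of_apply, map_sub, map_mul,
      apply_ite ψ, map_one, map_zero]
    simp [hψ]
  have hdetMF : MF.det ≠ 0 := by
    rw [hMF, ← RingHom.mapMatrix_apply, ← RingHom.map_det]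
    intro h
    exact hdetNP (hinj (by rw [h, map_zero]))
  set MK : Matrix ι ι K := NP.map ρ with hMK
  have hMFσ : ∀ i j, σ (MK i j) = MF i j := by
    intro i j
    simp only [hMK, hMF, Matrix.map_apply]
    exact hσρ _
  have hdetMK : MK.det ≠ 0 := by
    intro h
    apply hdetMF
    have : σ MK.det = MF.det := by
      rw [RingHom.map_det]
      congr 1
      refine Matrix.ext fun i j => ?_
      rw [RingHom.mapMatrix_apply, Matrix.map_apply]
      exact hMFσ i j
    rw [h, map_zero] at this
    exact this.symm
  -- the vector over F solves the system
  set cS : ι → F := fun i => c i.1 with hcSvec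
  set eF : ι → F := fun i => if i.1 = v then (1:F) else 0 with heF
  have hmulF : MF.mulVec cS = eF := by
    funext i
    show ∑ j, MF i j * cS j = eF i
    rw [Finset.sum_congr rfl (fun j _ => by rw [hMFapply i j])]
    rw [rowsum G S l c hcS i]
    exact hp i.1
  set eK : ι → K := fun i => if i.1 = v then (1:K) else 0 with heK
  set dK : ι → K := MK⁻¹.mulVec eK with hdK
  have hMKd : MK.mulVec dK = eK := by
    rw [hdK, Matrix.mulVec_mulVec, Matrix.mul_nonsing_inv _ (isUnit_iff_ne_zero.mpr hdetMK),
      Matrix.one_mulVec]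
  have hMKapply : ∀ i j : ι, MK i j
      = (if G.Adj i.1 j.1 then (1:K) else 0) - (ρ X) * (if i = j then 1 else 0) := by
    intro i j
    simp only [hMK, Matrix.map_apply, hNP, Matrix.of_apply, map_sub, map_mul,
      apply_ite ρ, map_one, map_zero]
  have hσdK : ∀ j : ι, σ (dK j) = c j.1 := by
    have hinjF : Function.Injective MF.mulVec :=
      Matrix.mulVec_injective_iff_isUnit.mpr
        ((Matrix.isUnit_iff_isUnit_det MF).mpr (isUnit_iff_ne_zero.mpr hdetMF))
    have hmulF2 : MF.mulVec (fun j => σ (dK j)) = eF := by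
      funext i
      show ∑ j, MF i j * σ (dK j) = eF i
      have : ∀ j : ι, MF i j * σ (dK j) = σ (MK i j * dK j) := by
        intro j
        rw [map_mul, hMFσ i j]
      rw [Finset.sum_congr rfl (fun j _ => this j), ← map_sum σ]
      have : ∑ j, MK i j * dK j = eK i := congrFun hMKd i
      rw [this, heK, heF, apply_ite σ, map_one, map_zero]
    have := hinjF (hmulF2.trans hmulF.symm)
    intro j
    exact congrFun this j
  -- define the propagator over K
  set cK : V → K := fun u => if h : u ∈ S then dK ⟨u, h⟩ else 0 with hcK
  have hcKS : ∀ u ∉ S, cK u = 0 := by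
    intro u hu
    simp [hcK, hu]
  have hσcK : ∀ u, σ (cK u) = c u := by
    intro u
    by_cases h : u ∈ S
    · simp only [hcK, dif_pos h]
      exact hσdK ⟨u, h⟩
    · simp only [hcK, dif_neg h, map_zero]
      exact (hcS u h).symm
  refine ⟨cK, S, hcKS, fun w => ?_⟩
  by_cases hw : w ∈ S
  · have : adjOp G cK w - (ρ X) * cK w = eK ⟨w, hw⟩ := by
      rw [← rowsum G S (ρ X) cK hcKS ⟨w, hw⟩]
      rw [← congrFun hMKd ⟨w, hw⟩]
      show _ = ∑ j, MK ⟨w, hw⟩ j * dK j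
      refine Finset.sum_congr rfl fun j _ => ?_
      rw [hMKapply ⟨w, hw⟩ j]
      congr 1
      simp only [hcK, dif_pos j.2]
    rw [this, heK]
  · have hwv : w ≠ v := fun h => hw (h ▸ hvS)
    have hzero : adjOp G cK w = 0 := by
      apply RingHom.injective σ
      have : σ (adjOp G cK w) = adjOp G c w := by
        rw [adjOp, map_sum]
        rw [adjOp]
        exact Finset.sum_congr rfl fun u _ => hσcK u
      rw [this, map_zero]
      have := hp w
      rw [if_neg hwv] at this
      rw [sub_eq_zero] at this
      rw [this, hcS w hw, mul_zero]
    rw [hzero, hcKS w hw, mul_zero, sub_zero, if_neg hwv]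
end Matrix



noncomputable section Laurent

abbrev LL := LaurentSeries ℚ


instance : CharZero LL := by
  constructor
  intro m n h
  have h2 : (HahnSeries.C : ℚ →+* LL) (m : ℚ) = HahnSeries.C (n : ℚ) := by
    rw [map_natCast, map_natCast]
    exact h
  exact Nat.cast_injective (HahnSeries.C_injective h2)

/-- coefficient extraction as an additive hom -/
def coeffHom (a : ℤ) : LL →+ ℚ where
  toFun f := f.coeff a
  map_zero' := HahnSeries.coeff_zero
  map_add' _ _ := HahnSeries.coeff_add

lemma injective_eval₂_single_neg_one :
    Function.Injective (Polynomial.eval₂RingHom (Rat.castHom LL)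
      (HahnSeries.single (-1 : ℤ) (1 : ℚ))) := by
  rw [injective_iff_map_eq_zero]
  intro p hp
  by_contra hp0
  set u : LL := HahnSeries.single (-1 : ℤ) (1 : ℚ) with hu
  have hcast : ∀ q : ℚ, Rat.castHom LL q = HahnSeries.single (0:ℤ) q := by
    intro q
    rw [eq_ratCast (Rat.castHom LL) q, ← eq_ratCast (HahnSeries.C : ℚ →+* LL) q,
      HahnSeries.C_apply]
  have hterm : ∀ i : ℕ, Rat.castHom LL (p.coeff i) * u ^ i
      = HahnSeries.single (-(i:ℤ)) (p.coeff i) := by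
    intro i
    rw [hcast, hu, HahnSeries.single_pow, HahnSeries.single_mul_single, one_pow, mul_one,
      zero_add, nsmul_eq_mul]
    norm_num
  have hsum : Polynomial.eval₂ (Rat.castHom LL) u p
      = ∑ i ∈ Finset.range (p.natDegree + 1), HahnSeries.single (-(i:ℤ)) (p.coeff i) := by
    rw [Polynomial.eval₂_eq_sum_range]
    exact Finset.sum_congr rfl fun i _ => hterm i
  have hcoeff : ∀ i : ℕ, i ≤ p.natDegree → p.coeff i = 0 := by
    intro i hi
    have h0 : coeffHom (-(i:ℤ)) (Polynomial.eval₂ (Rat.castHom LL) u p) = 0 := by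
      have : Polynomial.eval₂ (Rat.castHom LL) u p = 0 := hp
      rw [this, map_zero]
    rw [hsum, map_sum] at h0
    have : ∀ j ∈ Finset.range (p.natDegree + 1),
        coeffHom (-(i:ℤ)) (HahnSeries.single (-(j:ℤ)) (p.coeff j))
        = if j = i then p.coeff j else 0 := by
      intro j _
      show (HahnSeries.single (-(j:ℤ)) (p.coeff j)).coeff (-(i:ℤ)) = _
      rw [HahnSeries.coeff_single]
      congr 1
      simp [neg_inj, Int.natCast_inj, eq_comm]
    rw [Finset.sum_congr rfl this, Finset.sum_ite_eq' (Finset.range (p.natDegree + 1)) i] at h0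
    rw [if_pos (Finset.mem_range.mpr (Nat.lt_succ_of_le hi))] at h0
    exact h0
  apply hp0
  ext i
  rcases le_or_gt i p.natDegree with h | h
  · simp [hcoeff i h]
  · simp [Polynomial.coeff_eq_zero_of_natDegree_lt h]

end Laurent

noncomputable section WalkCount
variable {V : Type*} [DecidableEq V] (G : SimpleGraph V) [G.LocallyFinite]

/-- number of walks of length `k` from `v` to `w` (as a rational number) -/
def wc (v : V) : ℕ → V → ℚ
  | 0 => fun w => if w = v then 1 else 0
  | (k+1) => fun w => ∑ u ∈ G.neighborFinset w, wc v k u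

lemma wc_nonneg (v : V) (k : ℕ) (w : V) : 0 ≤ wc G v k w := by
  induction k generalizing w with
  | zero =>
    rw [wc]
    dsimp only
    split <;> norm_num
  | succ k ih =>
    rw [wc]
    exact Finset.sum_nonneg fun u _ => ih u

lemma wc_pos (v : V) (w : V) (h : G.Reachable w v) : ∃ k, 0 < wc G v k w := by
  obtain ⟨p⟩ := h
  induction p with
  | nil => exact ⟨0, by rw [wc]; simp⟩
  | @cons a x b hadj q ih =>
    obtain ⟨k, hk⟩ := ih
    refine ⟨k + 1, ?_⟩
    rw [wc]
    refine Finset.sum_pos' (fun y _ => wc_nonneg G b k y) ⟨x, ?_, hk⟩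
    exact (SimpleGraph.mem_neighborFinset G a x).mpr hadj

/-- the resolvent-type power series at a vertex -/
def wcSeries (v w : V) : PowerSeries ℚ := PowerSeries.mk fun k => wc G v k w

lemma wcSeries_key (v w : V) :
    PowerSeries.X * (∑ u ∈ G.neighborFinset w, wcSeries G v u)
      = wcSeries G v w - ((if w = v then 1 else 0) : PowerSeries ℚ) := by
  ext k
  rw [map_sub]
  cases k with
  | zero =>
    rw [PowerSeries.coeff_zero_X_mul]
    simp only [wcSeries, PowerSeries.coeff_mk]
    rcases eq_or_ne w v with h | h <;> simp [h, wc]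
  | succ k =>
    rw [PowerSeries.coeff_succ_X_mul, map_sum]
    simp only [wcSeries, PowerSeries.coeff_mk]
    have hite : ((PowerSeries.coeff (R := ℚ) (k+1)) ((if w = v then 1 else 0) : PowerSeries ℚ)) = 0 := by
      rcases eq_or_ne w v with h | h <;> simp [h, PowerSeries.coeff_one]
    rw [hite, sub_zero, wc]

/-- the `g` function: a nowhere-zero propagator over Laurent series -/
def gfun (v : V) : V → LL := fun w =>
  -(HahnSeries.ofPowerSeries ℤ ℚ (PowerSeries.X * wcSeries G v w))

lemma gfun_propagator (v w : V) :
    adjOp G (gfun G v) w - (HahnSeries.single (-1 : ℤ) (1 : ℚ)) * gfun G v w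
      = if w = v then 1 else 0 := by
  have hofX : (HahnSeries.ofPowerSeries ℤ ℚ) PowerSeries.X = HahnSeries.single 1 1 :=
    HahnSeries.ofPowerSeries_X
  have h1 : adjOp G (gfun G v) w
      = -(HahnSeries.ofPowerSeries ℤ ℚ
          (PowerSeries.X * ∑ u ∈ G.neighborFinset w, wcSeries G v u)) := by
    rw [adjOp]
    simp only [gfun]
    rw [Finset.sum_neg_distrib]
    congr 1
    rw [Finset.mul_sum, map_sum]
  have h2 : (HahnSeries.single (-1 : ℤ) (1 : ℚ)) * gfun G v w
      = -(HahnSeries.ofPowerSeries ℤ ℚ (wcSeries G v w)) := by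
    have hXX : (HahnSeries.single (-1:ℤ) (1:ℚ)) * HahnSeries.single (1:ℤ) (1:ℚ) = 1 := by
      rw [HahnSeries.single_mul_single, neg_add_cancel, mul_one, HahnSeries.single_zero_one]
    simp only [gfun]
    rw [map_mul, hofX]
    calc (HahnSeries.single (-1:ℤ) (1:ℚ))
          * -(HahnSeries.single (1:ℤ) (1:ℚ) * (HahnSeries.ofPowerSeries ℤ ℚ) (wcSeries G v w))
        = -(((HahnSeries.single (-1:ℤ) (1:ℚ)) * HahnSeries.single (1:ℤ) (1:ℚ))
            * (HahnSeries.ofPowerSeries ℤ ℚ) (wcSeries G v w)) := by ring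
      _ = -(HahnSeries.ofPowerSeries ℤ ℚ) (wcSeries G v w) := by rw [hXX, one_mul]
  rw [h1, h2, neg_sub_neg, ← map_sub, wcSeries_key, sub_sub_cancel]
  rcases eq_or_ne w v with h | h <;> simp [h]

lemma gfun_ne_zero (v : V) (w : V) (h : G.Reachable w v) : gfun G v w ≠ 0 := by
  obtain ⟨k, hk⟩ := wc_pos G v w h
  simp only [gfun, neg_eq_zero]
  intro hcontra
  have h0 : PowerSeries.X * wcSeries G v w = 0 := by
    apply HahnSeries.ofPowerSeries_injective (Γ := ℤ)
    rw [map_zero]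
    exact neg_eq_zero.mp hcontra
  rcases mul_eq_zero.mp h0 with h | h
  · exact PowerSeries.X_ne_zero h
  · have hco := congrArg (PowerSeries.coeff (R := ℚ) k) h
    simp only [wcSeries, PowerSeries.coeff_mk, map_zero] at hco
    exact hk.ne' hco
end WalkCount

theorem stmt10 {V F : Type*} [Infinite V] (G : SimpleGraph V) [G.LocallyFinite]
    (hconn : G.Connected) [Field F] [CharZero F]
    (l : F) (hl : Transcendental ℚ l) :
    ∃ f : V → F, f ≠ 0 ∧ ∀ w, adjOp G f w = l * f w := by
  classical
  by_contra hcon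
  push_neg at hcon
  have hno : ∀ f : V → F, (∀ w, adjOp G f w = l * f w) → f = 0 := by
    intro f hf
    by_contra hne
    obtain ⟨w, hw⟩ := hcon f hne
    exact hw (hf w)
  -- injectivity of evaluation at `l`
  have hinjF : Function.Injective (Polynomial.eval₂RingHom (Rat.castHom F) l) := by
    rw [injective_iff_map_eq_zero]
    intro p hp
    by_contra hp0
    apply hl
    refine ⟨p, hp0, ?_⟩
    rw [Polynomial.aeval_def]
    have hmap : algebraMap ℚ F = Rat.castHom F :=
      RingHom.ext fun q => by rw [eq_ratCast, eq_ratCast]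
    rw [hmap]
    exact hp
  set t : LL := HahnSeries.single (-1 : ℤ) (1 : ℚ) with ht
  -- propagators over the Laurent series field at every vertex
  have propL : ∀ v : V, ∃ (c : V → LL) (s : Finset V), (∀ u ∉ s, c u = 0) ∧
      ∀ w, adjOp G c w - t * c w = if w = v then 1 else 0 := by
    intro v
    obtain ⟨c, s, hs, hp⟩ := exists_finsupp_propagator G l hno v
    obtain ⟨c', s', hs', hp'⟩ := exists_propagator_overK G l hinjF v c s hs hp
    set τ : FractionRing (Polynomial ℚ) →+* LL :=
      IsFractionRing.lift injective_eval₂_single_neg_one with hτ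
    have hτX : τ (algebraMap (Polynomial ℚ) (FractionRing (Polynomial ℚ)) Polynomial.X) = t := by
      rw [hτ, IsFractionRing.lift_algebraMap]
      simp [ht]
    refine ⟨fun u => τ (c' u), s', fun u hu => by show τ (c' u) = 0; rw [hs' u hu, map_zero], fun w => ?_⟩
    have hkey := congrArg τ (hp' w)
    rw [map_sub, map_mul, adjOp_map G τ c' w, hτX, apply_ite τ, map_one, map_zero] at hkey
    exact hkey
  -- assemble the contradiction
  obtain ⟨v₀⟩ : Nonempty V := inferInstance
  obtain ⟨cV, sV, hsV, hpV⟩ := propL v₀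
  obtain ⟨w₀, hw₀⟩ := Infinite.exists_notMem_finset sV
  obtain ⟨cW, sW, hsW, hpW⟩ := propL w₀
  set b : V → LL := fun x => cV x - gfun G v₀ x with hb
  set s : Finset V := insert w₀ (sW ∪ sW.biUnion (fun x => G.neighborFinset x)) with hsdef
  have h1 : ∀ u ∉ s, cW u = 0 := fun u hu =>
    hsW u (fun h => hu (Finset.mem_insert_of_mem (Finset.mem_union_left _ h)))
  have h2 : ∀ u, cW u ≠ 0 → G.neighborFinset u ⊆ s := by
    intro u hu x hx
    have husW : u ∈ sW := by
      by_contra h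
      exact hu (hsW u h)
    exact Finset.mem_insert_of_mem (Finset.mem_union_right _ (Finset.mem_biUnion.mpr ⟨u, husW, hx⟩))
  have hpair := pairing G t cW b s h1 h2
  have hLHS : ∀ u ∈ s, cW u * (adjOp G b u - t * b u) = 0 := by
    intro u _
    have hbadj : adjOp G b u = adjOp G cV u - adjOp G (gfun G v₀) u := by
      rw [hb, adjOp, adjOp, adjOp, ← Finset.sum_sub_distrib]
    have hzero : adjOp G b u - t * b u = 0 := by
      rw [hbadj, hb]
      have e1 := hpV u
      have e2 := gfun_propagator G v₀ u
      linear_combination e1 - e2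
    rw [hzero, mul_zero]
  have hRHS : ∑ u ∈ s, b u * (adjOp G cW u - t * cW u) = b w₀ := by
    rw [Finset.sum_congr rfl (fun u _ => by rw [hpW u])]
    have hstep : ∀ u ∈ s, b u * (if u = w₀ then (1:LL) else 0) = if u = w₀ then b u else 0 := by
      intro u _
      rcases eq_or_ne u w₀ with h | h <;> simp [h]
    rw [Finset.sum_congr rfl hstep, Finset.sum_ite_eq' s w₀ b,
      if_pos (Finset.mem_insert_self _ _)]
  have hbw₀ : b w₀ = 0 := by
    rw [← hRHS, ← hpair]
    exact Finset.sum_eq_zero hLHS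
  have hg := gfun_ne_zero G v₀ w₀ (hconn.preconnected w₀ v₀)
  apply hg
  have : cV w₀ - gfun G v₀ w₀ = 0 := hbw₀
  rw [hsV w₀ hw₀, zero_sub, neg_eq_zero] at this
  exact this
end

section
/- Let Γ be a connected simple graph all of whose vertex degrees are at most a natural number d, let v be a vertex of Γ, and let λ ∈ ℂ be such that λ is not a real number of the interval [−d, d]. Then there exists exactly one function f : V(Γ) → ℂ which is square-summable (∑_{w ∈ V(Γ)} |f(w)|² < ∞) and is a (ℂ,λ)-propagator of Γ with respect to v. -/
open Function

noncomputable section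

namespace AuxStmt13

open scoped ComplexConjugate InnerProductSpace ENNReal NNReal

variable {V : Type*} [DecidableEq V] (G : SimpleGraph V) [G.LocallyFinite] [DecidableRel G.Adj]

lemma memℓp_two_iff (f : V → ℂ) :
    Memℓp f 2 ↔ Summable fun w => ‖f w‖ ^ 2 := by
  rw [memℓp_gen_iff (p := 2) (by norm_num)]
  rw [show ((2 : ℝ≥0∞).toReal) = ((2 : ℕ) : ℝ) by norm_num]
  simp_rw [Real.rpow_natCast]

lemma norm_sq_eq (f : lp (fun _ : V => ℂ) 2) : ‖f‖ ^ 2 = ∑' w, ‖f w‖ ^ 2 := by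
  have h := lp.norm_rpow_eq_tsum (p := 2) (by norm_num) f
  rw [show ((2 : ℝ≥0∞).toReal) = ((2 : ℕ) : ℝ) by norm_num] at h
  simp_rw [Real.rpow_natCast] at h
  exact h

variable {d : ℕ}

lemma finsum_bound (hdeg : ∀ u : V, G.degree u ≤ d) (g : V → ℝ)
    (hg : ∀ u, 0 ≤ g u) (hgs : Summable g) (S : Finset V) :
    ∑ w ∈ S, ∑ u ∈ G.neighborFinset w, g u ≤ d * ∑' w, g w := by
  classical
  set T : Finset V := S.biUnion (fun w => G.neighborFinset w) with hT
  have step1 : ∀ w ∈ S, ∑ u ∈ G.neighborFinset w, g u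
      = ∑ u ∈ T, if u ∈ G.neighborFinset w then g u else 0 := by
    intro w hw
    rw [Finset.sum_ite_mem, Finset.inter_eq_right.mpr (Finset.subset_biUnion_of_mem _ hw)]
  calc ∑ w ∈ S, ∑ u ∈ G.neighborFinset w, g u
      = ∑ w ∈ S, ∑ u ∈ T, if u ∈ G.neighborFinset w then g u else 0 :=
        Finset.sum_congr rfl step1
    _ = ∑ u ∈ T, ∑ w ∈ S, if u ∈ G.neighborFinset w then g u else 0 := Finset.sum_comm
    _ ≤ ∑ u ∈ T, (d : ℝ) * g u := by
        apply Finset.sum_le_sum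
        intro u _
        rw [← Finset.sum_filter]
        rw [Finset.sum_const, nsmul_eq_mul]
        have hsub : S.filter (fun w => u ∈ G.neighborFinset w) ⊆ G.neighborFinset u := by
          intro w hw
          simp only [Finset.mem_filter, SimpleGraph.mem_neighborFinset] at hw ⊢
          exact hw.2.symm
        have hcard : (S.filter (fun w => u ∈ G.neighborFinset w)).card ≤ d := by
          refine le_trans (Finset.card_le_card hsub) ?_
          rw [SimpleGraph.card_neighborFinset_eq_degree]
          exact hdeg u
        exact mul_le_mul_of_nonneg_right (by exact_mod_cast hcard) (hg u)
    _ = (d : ℝ) * ∑ u ∈ T, g u := by rw [Finset.mul_sum]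
    _ ≤ (d : ℝ) * ∑' w, g w := by
        apply mul_le_mul_of_nonneg_left (Summable.sum_le_tsum T (fun u _ => hg u) hgs)
          (Nat.cast_nonneg d)

lemma summable_nbr (hdeg : ∀ u : V, G.degree u ≤ d) (g : V → ℝ)
    (hg : ∀ u, 0 ≤ g u) (hgs : Summable g) :
    Summable (fun w => ∑ u ∈ G.neighborFinset w, g u) :=
  summable_of_sum_le (fun w => Finset.sum_nonneg fun u _ => hg u)
    (finsum_bound G hdeg g hg hgs)

lemma tsum_nbr_le (hdeg : ∀ u : V, G.degree u ≤ d) (g : V → ℝ)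
    (hg : ∀ u, 0 ≤ g u) (hgs : Summable g) :
    ∑' w, ∑ u ∈ G.neighborFinset w, g u ≤ d * ∑' w, g w :=
  Summable.tsum_le_of_sum_le (summable_nbr G hdeg g hg hgs) (finsum_bound G hdeg g hg hgs)

lemma pointwise_bound (hdeg : ∀ u : V, G.degree u ≤ d) (f : V → ℂ) (w : V) :
    ‖adjOp G f w‖ ^ 2 ≤ d * ∑ u ∈ G.neighborFinset w, ‖f u‖ ^ 2 := by
  calc ‖adjOp G f w‖ ^ 2 ≤ (∑ u ∈ G.neighborFinset w, ‖f u‖) ^ 2 := by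
        apply pow_le_pow_left₀ (norm_nonneg _) (norm_sum_le _ _)
    _ ≤ (G.neighborFinset w).card * ∑ u ∈ G.neighborFinset w, ‖f u‖ ^ 2 :=
        sq_sum_le_card_mul_sum_sq
    _ ≤ d * ∑ u ∈ G.neighborFinset w, ‖f u‖ ^ 2 := by
        apply mul_le_mul_of_nonneg_right _ (Finset.sum_nonneg fun u _ => sq_nonneg _)
        have := hdeg w
        rw [← SimpleGraph.card_neighborFinset_eq_degree] at this
        exact_mod_cast this

lemma adj_summable_and_bound (hdeg : ∀ u : V, G.degree u ≤ d) (f : V → ℂ)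
    (hf : Summable fun w => ‖f w‖ ^ 2) :
    Summable (fun w => ‖adjOp G f w‖ ^ 2) ∧
      ∑' w, ‖adjOp G f w‖ ^ 2 ≤ (d : ℝ) ^ 2 * ∑' w, ‖f w‖ ^ 2 := by
  have hnn : ∀ u, (0 : ℝ) ≤ ‖f u‖ ^ 2 := fun u => sq_nonneg _
  have hs := summable_nbr G hdeg _ hnn hf
  have hmaj := pointwise_bound G hdeg f
  have h1 : Summable fun w => ‖adjOp G f w‖ ^ 2 :=
    Summable.of_nonneg_of_le (fun w => sq_nonneg _) hmaj (hs.mul_left _)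
  refine ⟨h1, ?_⟩
  calc ∑' w, ‖adjOp G f w‖ ^ 2
      ≤ ∑' w, (d : ℝ) * ∑ u ∈ G.neighborFinset w, ‖f u‖ ^ 2 :=
        Summable.tsum_le_tsum hmaj h1 (hs.mul_left _)
    _ = (d : ℝ) * ∑' w, ∑ u ∈ G.neighborFinset w, ‖f u‖ ^ 2 := tsum_mul_left
    _ ≤ (d : ℝ) * ((d : ℝ) * ∑' w, ‖f w‖ ^ 2) :=
        mul_le_mul_of_nonneg_left (tsum_nbr_le G hdeg _ hnn hf) (Nat.cast_nonneg d)
    _ = (d : ℝ) ^ 2 * ∑' w, ‖f w‖ ^ 2 := by ring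

section Op

variable (hdeg : ∀ u : V, G.degree u ≤ d)

include hdeg in
lemma memℓp_adj (f : lp (fun _ : V => ℂ) 2) : Memℓp (adjOp G (f : V → ℂ)) 2 := by
  rw [memℓp_two_iff]
  exact (adj_summable_and_bound G hdeg _ ((memℓp_two_iff _).mp f.2)).1

/-- The adjacency operator as a linear map on `ℓ²`. -/
def Araw : lp (fun _ : V => ℂ) 2 →ₗ[ℂ] lp (fun _ : V => ℂ) 2 where
  toFun f := ⟨adjOp G (f : V → ℂ), memℓp_adj G hdeg f⟩
  map_add' f g := by
    apply lp.ext
    funext w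
    exact Finset.sum_add_distrib
  map_smul' c f := by
    apply lp.ext
    funext w
    simpa [adjOp] using (Finset.mul_sum (G.neighborFinset w) (fun u => (f : V → ℂ) u) c).symm

include hdeg in
lemma Araw_norm_le (f : lp (fun _ : V => ℂ) 2) : ‖Araw G hdeg f‖ ≤ (d : ℝ) * ‖f‖ := by
  have hnn : (0:ℝ) ≤ ‖Araw G hdeg f‖ := norm_nonneg _
  have hnn' : (0:ℝ) ≤ (d : ℝ) * ‖f‖ := by positivity
  have hsq : ‖Araw G hdeg f‖ ^ 2 ≤ ((d : ℝ) * ‖f‖) ^ 2 := by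
    rw [norm_sq_eq, mul_pow, norm_sq_eq]
    exact (adj_summable_and_bound G hdeg _ ((memℓp_two_iff _).mp f.2)).2
  nlinarith

/-- The adjacency operator as a continuous linear map on `ℓ²`. -/
def Aop : lp (fun _ : V => ℂ) 2 →L[ℂ] lp (fun _ : V => ℂ) 2 :=
  LinearMap.mkContinuous (Araw G hdeg) d (Araw_norm_le G hdeg)

lemma Aop_apply (f : lp (fun _ : V => ℂ) 2) (w : V) :
    (Aop G hdeg f : V → ℂ) w = adjOp G (f : V → ℂ) w := rfl

lemma Aop_norm_le : ‖Aop G hdeg‖ ≤ (d : ℝ) :=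
  LinearMap.mkContinuous_norm_le _ (Nat.cast_nonneg d) _

lemma row_tsum (c : V → ℂ) (w : V) :
    ∑' u, (if G.Adj w u then c u else 0) = ∑ u ∈ G.neighborFinset w, c u := by
  rw [tsum_eq_sum (s := G.neighborFinset w)
    (fun u hu => if_neg (fun h => hu ((SimpleGraph.mem_neighborFinset G w u).mpr h)))]
  exact Finset.sum_congr rfl fun u hu =>
    if_pos ((SimpleGraph.mem_neighborFinset G w u).mp hu)

lemma row_summable (c : V → ℂ) (w : V) :
    Summable (fun u => if G.Adj w u then c u else 0) :=
  summable_of_ne_finset_zero (s := G.neighborFinset w)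
    (fun u hu => if_neg (fun h => hu ((SimpleGraph.mem_neighborFinset G w u).mpr h)))

include hdeg in
lemma summableQ (f : V → ℂ) (hf : Summable fun w => ‖f w‖ ^ 2) :
    Summable (fun p : V × V => if G.Adj p.1 p.2 then ‖f p.2‖ ^ 2 else 0) := by
  have hnn : ∀ p : V × V, (0:ℝ) ≤ if G.Adj p.1 p.2 then ‖f p.2‖ ^ 2 else 0 := by
    intro p; split
    · exact sq_nonneg _
    · exact le_refl 0
  apply summable_of_sum_le hnn
  intro s
  calc ∑ p ∈ s, (if G.Adj p.1 p.2 then ‖f p.2‖ ^ 2 else 0)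
      ≤ ∑ p ∈ (s.image Prod.fst) ×ˢ (s.image Prod.snd),
          (if G.Adj p.1 p.2 then ‖f p.2‖ ^ 2 else 0) :=
        Finset.sum_le_sum_of_subset_of_nonneg Finset.subset_product
          (fun p _ _ => hnn p)
    _ = ∑ w ∈ s.image Prod.fst, ∑ u ∈ s.image Prod.snd,
          (if G.Adj w u then ‖f u‖ ^ 2 else 0) := by rw [Finset.sum_product]
    _ ≤ ∑ w ∈ s.image Prod.fst, ∑ u ∈ G.neighborFinset w, ‖f u‖ ^ 2 := by
        apply Finset.sum_le_sum
        intro w _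
        rw [← Finset.sum_filter]
        apply Finset.sum_le_sum_of_subset_of_nonneg
        · intro u hu
          rw [SimpleGraph.mem_neighborFinset]
          exact (Finset.mem_filter.mp hu).2
        · exact fun u _ _ => sq_nonneg _
    _ ≤ d * ∑' w, ‖f w‖ ^ 2 :=
        finsum_bound G hdeg _ (fun u => sq_nonneg _) hf _

include hdeg in
lemma summableP (f g : lp (fun _ : V => ℂ) 2) :
    Summable (fun p : V × V =>
      if G.Adj p.1 p.2 then (starRingEnd ℂ) ((f : V → ℂ) p.2) * (g : V → ℂ) p.1 else 0) := by
  have hf : Summable fun w => ‖(f : V → ℂ) w‖ ^ 2 := (memℓp_two_iff _).mp f.2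
  have hg : Summable fun w => ‖(g : V → ℂ) w‖ ^ 2 := (memℓp_two_iff _).mp g.2
  have hQ1 := summableQ G hdeg _ hf
  have hQ2 : Summable (fun p : V × V => if G.Adj p.1 p.2 then ‖(g : V → ℂ) p.1‖ ^ 2 else 0) := by
    have h := (Equiv.prodComm V V).summable_iff.mpr (summableQ G hdeg _ hg)
    apply h.congr
    intro p
    simp only [Function.comp, Equiv.prodComm_apply, Prod.fst_swap, Prod.snd_swap,
      Equiv.coe_prodComm]
    exact if_congr (G.adj_comm p.2 p.1) rfl rfl
  apply Summable.of_norm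
  apply Summable.of_nonneg_of_le (fun p => norm_nonneg _) _ (hQ1.add hQ2)
  intro p
  by_cases h : G.Adj p.1 p.2
  · simp only [h, if_true]
    rw [norm_mul, RingHomIsometric.norm_map]
    nlinarith [sq_nonneg (‖(f : V → ℂ) p.2‖ - ‖(g : V → ℂ) p.1‖), norm_nonneg ((f : V → ℂ) p.2),
      norm_nonneg ((g : V → ℂ) p.1)]
  · simp [h]

include hdeg in
lemma Aop_symm (f g : lp (fun _ : V => ℂ) 2) :
    ⟪Aop G hdeg f, g⟫_ℂ = ⟪f, Aop G hdeg g⟫_ℂ := by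
  have hP := summableP G hdeg f g
  set P : V × V → ℂ := fun p =>
    if G.Adj p.1 p.2 then (starRingEnd ℂ) ((f : V → ℂ) p.2) * (g : V → ℂ) p.1 else 0 with hPdef
  have hL : ⟪Aop G hdeg f, g⟫_ℂ = ∑' w, ∑' u, P (w, u) := by
    rw [lp.inner_eq_tsum]
    apply tsum_congr
    intro w
    rw [RCLike.inner_apply', Aop_apply, adjOp, map_sum, Finset.sum_mul]
    rw [show (∑' u, P (w, u)) = ∑ u ∈ G.neighborFinset w,
        (starRingEnd ℂ) ((f : V → ℂ) u) * (g : V → ℂ) w from row_tsum G _ w]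
  have hR : ⟪f, Aop G hdeg g⟫_ℂ = ∑' u, ∑' w, P (w, u) := by
    rw [lp.inner_eq_tsum]
    apply tsum_congr
    intro u
    rw [RCLike.inner_apply', Aop_apply, adjOp, Finset.mul_sum]
    have : (∑' w, P (w, u)) = ∑ w ∈ G.neighborFinset u,
        (starRingEnd ℂ) ((f : V → ℂ) u) * (g : V → ℂ) w := by
      rw [tsum_eq_sum (s := G.neighborFinset u) (fun w hw => if_neg
        (fun h => hw ((SimpleGraph.mem_neighborFinset G u w).mpr h.symm)))]
      exact Finset.sum_congr rfl fun w hw =>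
        if_pos ((SimpleGraph.mem_neighborFinset G u w).mp hw).symm
    rw [this]
  rw [hL, hR]
  exact (Summable.tsum_comm' (f := fun w u => P (w, u)) hP
    (fun w => row_summable G (fun u => (starRingEnd ℂ) ((f : V → ℂ) u) * (g : V → ℂ) w) w)
    (fun u => summable_of_ne_finset_zero (s := G.neighborFinset u)
      (fun w hw => if_neg
        (fun h => hw ((SimpleGraph.mem_neighborFinset G u w).mpr h.symm))))).symm

end Op

end AuxStmt13

end

theorem stmt13 {V : Type*} [DecidableEq V] (G : SimpleGraph V) [G.LocallyFinite]
    (hconn : G.Connected) (d : ℕ) (hdeg : ∀ u : V, G.degree u ≤ d)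
    (v : V) (l : ℂ) (hl : ¬ (l.im = 0 ∧ -(d : ℝ) ≤ l.re ∧ l.re ≤ (d : ℝ))) :
    ∃! f : V → ℂ, (Summable fun w : V => ‖f w‖ ^ 2) ∧ IsPropagator G l v f := by
  classical
  haveI : DecidableRel G.Adj := Classical.decRel _
  set A : lp (fun _ : V => ℂ) 2 →L[ℂ] lp (fun _ : V => ℂ) 2 := AuxStmt13.Aop G hdeg with hA
  haveI : Nontrivial (lp (fun _ : V => ℂ) 2) := by
    refine ⟨⟨lp.single 2 v 1, 0, fun h => one_ne_zero (α := ℂ) ?_⟩⟩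
    have h2 := congrArg (fun x : lp (fun _ : V => ℂ) 2 => (x : V → ℂ) v) h
    simpa [lp.single_apply_self] using h2
  have hself : IsSelfAdjoint A :=
    ContinuousLinearMap.isSelfAdjoint_iff_isSymmetric.mpr
      (fun x y => AuxStmt13.Aop_symm G hdeg x y)
  have hnot : l ∉ spectrum ℂ A := by
    intro hm
    have h1 : l = (l.re : ℂ) := hself.mem_spectrum_eq_re hm
    have h2 : ‖l‖ ≤ ‖A‖ := spectrum.norm_le_norm_of_mem hm
    have h3 : ‖A‖ ≤ (d : ℝ) := AuxStmt13.Aop_norm_le G hdeg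
    have h4 : |l.re| ≤ (d : ℝ) := by
      have : ‖l‖ = |l.re| := by rw [h1]; exact RCLike.norm_ofReal (K := ℂ) l.re
      linarith
    exact hl ⟨by rw [h1]; simp, (abs_le.mp h4).1, (abs_le.mp h4).2⟩
  have hu : IsUnit ((algebraMap ℂ (lp (fun _ : V => ℂ) 2 →L[ℂ] lp (fun _ : V => ℂ) 2)) l - A) :=
    spectrum.notMem_iff.mp hnot
  set u := hu.unit with hu_def
  have huspec : (u : lp (fun _ : V => ℂ) 2 →L[ℂ] lp (fun _ : V => ℂ) 2)
      = (algebraMap ℂ _) l - A := hu.unit_spec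
  set δ : lp (fun _ : V => ℂ) 2 := lp.single 2 v 1 with hδ
  have hδapp : ∀ w : V, (δ : V → ℂ) w = if w = v then 1 else 0 := by
    intro w
    by_cases h : w = v
    · subst h; simp [hδ, lp.single_apply_self]
    · simp [hδ, lp.single_apply_ne 2 v _ h, h]
  set F : lp (fun _ : V => ℂ) 2 := (↑u⁻¹ : lp (fun _ : V => ℂ) 2 →L[ℂ] _) (-δ) with hF
  -- key algebraic identity for any lp element
  have happly : ∀ (x : lp (fun _ : V => ℂ) 2) (w : V),
      (((algebraMap ℂ _) l - A) x : V → ℂ) w = l * (x : V → ℂ) w - adjOp G (x : V → ℂ) w := by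
    intro x w
    have : (((algebraMap ℂ _) l - A) x) = l • x - A x := by
      rw [Algebra.algebraMap_eq_smul_one, ContinuousLinearMap.sub_apply,
        ContinuousLinearMap.smul_apply, ContinuousLinearMap.one_apply]
    rw [this]
    rw [lp.coeFn_sub, Pi.sub_apply, lp.coeFn_smul, Pi.smul_apply]
    rw [AuxStmt13.Aop_apply G hdeg x w]
    simp [smul_eq_mul]
  have hFsolve : ∀ w, adjOp G (F : V → ℂ) w - l * (F : V → ℂ) w = if w = v then 1 else 0 := by
    intro w
    have h1 : ((algebraMap ℂ _) l - A) F = -δ := by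
      rw [← huspec, hF]
      calc (u : lp (fun _ : V => ℂ) 2 →L[ℂ] _) ((↑u⁻¹ : lp (fun _ : V => ℂ) 2 →L[ℂ] _) (-δ))
          = ((u * u⁻¹ : _) : lp (fun _ : V => ℂ) 2 →L[ℂ] _) (-δ) := rfl
        _ = -δ := by rw [mul_inv_cancel, Units.val_one]; rfl
    have h2 := congrArg (fun x : lp (fun _ : V => ℂ) 2 => (x : V → ℂ) w) h1
    simp only at h2
    rw [happly F w] at h2
    have h3 : ((-δ : lp (fun _ : V => ℂ) 2) : V → ℂ) w = -((δ : V → ℂ) w) := by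
      rw [lp.coeFn_neg]; rfl
    rw [h3, hδapp w] at h2
    linear_combination -h2
  refine ⟨(F : V → ℂ), ⟨?_, hFsolve⟩, ?_⟩
  · have := (AuxStmt13.memℓp_two_iff (V := V) _).mp F.2
    apply this.congr
    intro w
    rfl
  · rintro f ⟨hsum, hprop⟩
    have hmem : Memℓp f 2 := by
      rw [AuxStmt13.memℓp_two_iff]
      apply hsum.congr
      intro w
      rfl
    set F' : lp (fun _ : V => ℂ) 2 := ⟨f, hmem⟩ with hF'
    have hcoe : (F' : V → ℂ) = f := rfl
    have h1 : ((algebraMap ℂ _) l - A) F' = -δ := by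
      apply lp.ext
      funext w
      have h2 := hprop w
      rw [show ((((algebraMap ℂ _) l - A) F' : lp (fun _ : V => ℂ) 2) : V → ℂ) w
        = l * (F' : V → ℂ) w - adjOp G (F' : V → ℂ) w from happly F' w]
      rw [show ((-δ : lp (fun _ : V => ℂ) 2) : V → ℂ) w = -((δ : V → ℂ) w) by
        rw [lp.coeFn_neg]; rfl]
      rw [hδapp w, hcoe]
      linear_combination -h2
    have h4 : F' = F := by
      have h5 : (↑u⁻¹ : lp (fun _ : V => ℂ) 2 →L[ℂ] _)
          ((u : lp (fun _ : V => ℂ) 2 →L[ℂ] _) F') = F := by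
        rw [huspec, h1, hF]
      calc F' = ((u⁻¹ * u : _) : lp (fun _ : V => ℂ) 2 →L[ℂ] _) F' := by
            rw [inv_mul_cancel, Units.val_one]; rfl
        _ = F := h5
    rw [← hcoe, h4]
end

section
/- Let F be a field of characteristic 0 and let Δ be a finite connected simple graph with more than one vertex. Let A be the adjacency matrix of Δ over the polynomial ring F[x] and let M = x·I − A be its characteristic matrix. Then every minor of M of order |V(Δ)| − 1 is a nonzero polynomial; equivalently, every entry of the adjugate matrix of M is a nonzero element of F[x]. Consequently, the inverse of M over the field of rational functions F(x) has all entries nonzero. -/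
open Polynomial Matrix Finset

theorem stmt14 {V F : Type*} [Fintype V] [DecidableEq V] [Field F] [CharZero F]
    (D : SimpleGraph V) [DecidableRel D.Adj] (hconn : D.Connected)
    (hcard : 1 < Fintype.card V) :
    (∀ i j : V, (Matrix.charmatrix (D.adjMatrix F)).adjugate i j ≠ 0) ∧
    (∀ i j : V, ((Matrix.charmatrix (D.adjMatrix F)).map
        (algebraMap (Polynomial F) (RatFunc F)))⁻¹ i j ≠ 0) := by
  classical
  set n := Fintype.card V with hn
  set A := D.adjMatrix F with hA
  set p := A.charpoly with hp
  have hpn : p.natDegree = n := A.charpoly_natDegree_eq_dim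
  have hmon : p.Monic := A.charpoly_monic
  have hcn : p.coeff n = 1 := by rw [← hpn]; exact hmon.coeff_natDegree
  set B : ℕ → Matrix V V F :=
    fun k => ∑ j ∈ Finset.range (n + 1 - k), p.coeff (k + j) • A ^ j with hB
  have hB0 : B 0 = 0 := by
    have h := A.aeval_self_charpoly
    rw [aeval_eq_sum_range] at h
    rw [hB]
    simpa [hpn, ← hp] using h
  have hBn : B n = 1 := by
    rw [hB]; simp [hcn]
  have hBrec : ∀ k, k < n → A * B (k + 1) + p.coeff k • 1 = B k := by
    intro k hk
    rw [hB]
    simp only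
    rw [show n + 1 - k = (n - k) + 1 from by omega,
      show n + 1 - (k + 1) = n - k from by omega,
      Finset.sum_range_succ', Finset.mul_sum]
    simp only [add_zero, pow_zero]
    congr 1
    refine Finset.sum_congr rfl fun j hj => ?_
    rw [mul_smul_comm, show k + (j + 1) = k + 1 + j from by omega, ← pow_succ']
  set N : Matrix V V F[X] :=
    ∑ k ∈ Finset.range n, (X : F[X]) ^ k • (B (k + 1)).map C with hN
  have hsmul1 : ∀ c : F, ((c • 1 : Matrix V V F)).map C = C c • (1 : Matrix V V F[X]) := by
    intro c; ext a b
    by_cases hab : a = b <;> simp [hab, Matrix.one_apply, Matrix.map_apply]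
  have hchar : charmatrix A = (X : F[X]) • (1 : Matrix V V F[X]) - A.map C := by
    ext a b
    by_cases hab : a = b <;>
      simp [charmatrix_apply, Matrix.diagonal_apply, hab, Matrix.one_apply, Matrix.map_apply]
  have key : charmatrix A * N = p • 1 := by
    rw [hN, Finset.mul_sum]
    have step : ∀ k ∈ Finset.range n,
        charmatrix A * ((X : F[X]) ^ k • (B (k + 1)).map C)
          = ((X : F[X]) ^ (k + 1) • (B (k + 1)).map C - (X : F[X]) ^ k • (B k).map C)
            + (C (p.coeff k) * X ^ k) • 1 := by
      intro k hk
      rw [Finset.mem_range] at hk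
      have hBk : (B k).map C = A.map C * (B (k + 1)).map C + C (p.coeff k) • 1 := by
        rw [← hBrec k hk,
          Matrix.map_add (⇑(C : F →+* F[X])) (fun a₁ a₂ => map_add C a₁ a₂),
          hsmul1, Matrix.map_mul]
      rw [hchar, hBk]
      rw [sub_mul, Matrix.smul_mul, Matrix.one_mul, Matrix.mul_smul, smul_smul, ← pow_succ']
      rw [smul_add, smul_smul, mul_comm (C (p.coeff k)) ((X : F[X]) ^ k)]
      abel
    have hmap0 : ((0 : Matrix V V F)).map (⇑(C : F →+* F[X])) = 0 :=
      Matrix.map_zero _ (map_zero C)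
    have hmap1 : ((1 : Matrix V V F)).map (⇑(C : F →+* F[X])) = 1 :=
      Matrix.map_one _ (map_zero C) (map_one C)
    rw [Finset.sum_congr rfl step, Finset.sum_add_distrib,
      Finset.sum_range_sub (fun k => (X : F[X]) ^ k • (B k).map C)]
    rw [hBn, hB0, hmap0, hmap1, smul_zero, sub_zero]
    rw [← Finset.sum_smul]
    have hpexp : p = ∑ k ∈ Finset.range n, C (p.coeff k) * X ^ k + X ^ n := by
      conv_lhs => rw [p.as_sum_range' (n + 1) (by omega)]
      rw [Finset.sum_range_succ]
      simp [hcn, ← C_mul_X_pow_eq_monomial]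
    conv_rhs => rw [hpexp]
    rw [add_smul, add_comm]
  have hdetc : (charmatrix A).det = p := rfl
  have hadj : (charmatrix A).adjugate = N := by
    have h1 : p • N = p • (charmatrix A).adjugate := by
      calc p • N = ((charmatrix A).adjugate * charmatrix A) * N := by
            rw [Matrix.adjugate_mul, hdetc, Matrix.smul_mul, Matrix.one_mul]
        _ = (charmatrix A).adjugate * (charmatrix A * N) := by rw [Matrix.mul_assoc]
        _ = (charmatrix A).adjugate * (p • 1) := by rw [key]
        _ = p • (charmatrix A).adjugate := by rw [Matrix.mul_smul, Matrix.mul_one]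
    refine Matrix.ext fun a b => ?_
    have h2 : (p • (charmatrix A).adjugate) a b = (p • N) a b := by rw [h1]
    simp only [Matrix.smul_apply, smul_eq_mul] at h2
    exact mul_left_cancel₀ hmon.ne_zero h2
  have main : ∀ i j : V, N i j ≠ 0 := by
    intro i j hzero
    set d := D.dist i j with hd
    obtain ⟨w, hwp, hwl⟩ := hconn.exists_path_of_dist i j
    have hdn : d < n := by have h8 := hwp.length_lt; omega
    have hNij : (N i j).coeff (n - 1 - d) = (B (n - d)) i j := by
      rw [hN]
      simp only [Finset.sum_apply, Matrix.sum_apply, Matrix.smul_apply, Matrix.map_apply,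
        smul_eq_mul]
      rw [finset_sum_coeff]
      have : ∀ k ∈ Finset.range n,
          ((X : F[X]) ^ k * C ((B (k + 1)) i j)).coeff (n - 1 - d)
            = if n - 1 - d = k then (B (k + 1)) i j else 0 := by
        intro k hk
        rw [mul_comm, coeff_C_mul_X_pow]
      rw [Finset.sum_congr rfl this, Finset.sum_ite_eq]
      rw [if_pos (Finset.mem_range.mpr (by omega))]
      congr 1
      omega
    have hBval : (B (n - d)) i j
        = ((Fintype.card {q : D.Walk i j | q.length = d} : ℕ) : F) := by
      rw [hB]
      simp only [Matrix.sum_apply]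
      rw [show n + 1 - (n - d) = d + 1 from by omega, Finset.sum_range_succ]
      have hzeros : ∀ jj ∈ Finset.range d, ((p.coeff (n - d + jj) • A ^ jj) i j : F) = 0 := by
        intro jj hjj
        rw [Finset.mem_range] at hjj
        have hA0 : (A ^ jj) i j = 0 := by
          rw [hA, SimpleGraph.adjMatrix_pow_apply_eq_card_walk]
          haveI : IsEmpty {q : D.Walk i j | q.length = jj} := by
            refine ⟨fun q => ?_⟩
            have h6 := D.dist_le q.1
            have h7 : q.1.length = jj := q.2
            omega
          rw [Fintype.card_eq_zero, Nat.cast_zero]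
        simp [Matrix.smul_apply, hA0]
      rw [Finset.sum_eq_zero hzeros, zero_add]
      rw [show n - d + d = n from by omega]
      simp [Matrix.smul_apply, hcn, hA, SimpleGraph.adjMatrix_pow_apply_eq_card_walk]
    have hpos : Fintype.card {q : D.Walk i j | q.length = d} ≠ 0 :=
      (Fintype.card_pos_iff.mpr ⟨⟨w, hwl⟩⟩).ne'
    have hzero' : ((Fintype.card {q : D.Walk i j | q.length = d} : ℕ) : F) = 0 := by
      rw [← hBval, ← hNij, hzero, coeff_zero]
    exact hpos (Nat.cast_eq_zero.mp hzero')
  have part1 : ∀ i j : V, (charmatrix A).adjugate i j ≠ 0 := by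
    intro i j; rw [hadj]; exact main i j
  refine ⟨part1, fun i j => ?_⟩
  set φ := algebraMap (Polynomial F) (RatFunc F) with hφ
  have hinj : Function.Injective φ := RatFunc.algebraMap_injective F
  have hdet : ((charmatrix A).map φ).det = φ p := by
    rw [← RingHom.mapMatrix_apply, ← RingHom.map_det, hdetc]
  have hdet0 : ((charmatrix A).map φ).det ≠ 0 := by
    rw [hdet]
    intro h
    exact hmon.ne_zero (hinj (by simpa using h))
  rw [Matrix.inv_def]
  rw [← RingHom.mapMatrix_apply, ← RingHom.map_adjugate]
  simp only [Matrix.smul_apply, RingHom.mapMatrix_apply, Matrix.map_apply, smul_eq_mul]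
  apply mul_ne_zero
  · rw [Ring.inverse_eq_inv]
    exact inv_ne_zero hdet0
  · intro h
    exact part1 i j (hinj (by simpa using h))
end

section
/- Let Δ be a finite connected simple graph with more than one vertex, let F be a field of characteristic 0, and let λ ∈ F be an element that is not an eigenvalue of the adjacency matrix of Δ over F, but such that some (F,λ)-propagator of Δ with respect to some vertex u takes the value 0 at some vertex u′. Then λ is algebraic over the prime subfield ℚ of F of degree strictly less than |V(Δ)| (i.e., λ is a root of a nonzero polynomial over ℚ of degree < |V(Δ)|). -/
open Function

open Polynomial Matrix Finset

/-- Each entry of the adjugate of the characteristic matrix has degree at most `n - 1`. -/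
lemma natDegree_adjugate_charmatrix_le {V : Type*} [Fintype V] [DecidableEq V]
    (M : Matrix V V ℚ) (i j : V) :
    ((Matrix.adjugate (Matrix.charmatrix M)) i j).natDegree ≤ Fintype.card V - 1 := by
  rw [Matrix.adjugate_apply, Matrix.det_apply]
  apply Polynomial.natDegree_sum_le_of_forall_le
  intro σ _
  have hterm : ∀ k : V,
      (((Matrix.charmatrix M).updateRow j (Pi.single i 1)) (σ k) k).natDegree ≤
        if σ k = j then 0 else 1 := by
    intro k
    rw [Matrix.updateRow_apply]
    by_cases h : σ k = j
    · simp only [h, if_pos rfl]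
      rcases eq_or_ne k i with rfl | hk
      · simp
      · simp [Pi.single_eq_of_ne hk]
    · simp only [h, if_neg h]
      rcases eq_or_ne (σ k) k with he | hne
      · rw [he, Matrix.charmatrix_apply_eq]
        exact (Polynomial.natDegree_X_sub_C _).le
      · rw [Matrix.charmatrix_apply_ne _ _ _ hne]
        simp
  have hsum : ∑ k : V, (if σ k = j then (0 : ℕ) else 1) = Fintype.card V - 1 := by
    rw [Fintype.sum_equiv σ _ (fun k => if k = j then (0 : ℕ) else 1) (fun k => rfl)]
    simp [Finset.sum_ite, Finset.filter_ne', Finset.card_erase_of_mem]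
  have hmain : (∏ k : V, ((Matrix.charmatrix M).updateRow j (Pi.single i 1)) (σ k) k).natDegree
      ≤ Fintype.card V - 1 := by
    refine (Polynomial.natDegree_prod_le _ _).trans ?_
    calc ∑ k : V, (((Matrix.charmatrix M).updateRow j (Pi.single i 1)) (σ k) k).natDegree
        ≤ ∑ k : V, (if σ k = j then (0 : ℕ) else 1) := Finset.sum_le_sum fun k _ => hterm k
      _ = Fintype.card V - 1 := hsum
  rcases Int.units_eq_one_or (Equiv.Perm.sign σ) with hs | hs
  · rw [hs, one_smul]; exact hmain
  · rw [hs, Units.neg_smul, one_smul, Polynomial.natDegree_neg]; exact hmain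

/-- For a connected graph, every entry of the adjugate of the characteristic matrix of
the adjacency matrix is a nonzero polynomial. -/
lemma adjugate_charmatrix_ne_zero {V : Type*} [Fintype V] [DecidableEq V]
    (D : SimpleGraph V) [DecidableRel D.Adj] (hconn : D.Connected) (u' u : V) :
    Matrix.adjugate (Matrix.charmatrix (D.adjMatrix ℚ)) u' u ≠ 0 := by
  intro hq
  set A : Matrix V V ℚ := D.adjMatrix ℚ with hA
  set n := Fintype.card V with hn
  set d := D.dist u' u with hd
  set B := Matrix.adjugate (Matrix.charmatrix A) with hB
  -- walk counting facts
  obtain ⟨p, hp⟩ := hconn.exists_walk_length_eq_dist u' u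
  have hc : (A ^ d) u' u ≠ 0 := by
    rw [SimpleGraph.adjMatrix_pow_apply_eq_card_walk]
    have : Nonempty {q : D.Walk u' u | q.length = d} := ⟨⟨p, hp⟩⟩
    exact_mod_cast Nat.cast_ne_zero.mpr Fintype.card_ne_zero
  have hk : ∀ k < d, (A ^ k) u' u = 0 := by
    intro k hkd
    rw [SimpleGraph.adjMatrix_pow_apply_eq_card_walk]
    have : IsEmpty {q : D.Walk u' u | q.length = k} := by
      constructor
      rintro ⟨q, hq'⟩
      have := SimpleGraph.dist_le q
      simp only [Set.mem_setOf_eq] at hq'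
      omega
    haveI := this
    rw [Fintype.card_eq_zero]
    simp
  -- matrix algebra
  set x : Matrix V V ℚ[X] := (X : ℚ[X]) • 1 with hx
  set y : Matrix V V ℚ[X] := (C : ℚ →+* ℚ[X]).mapMatrix A with hy
  have hN : Matrix.charmatrix A = x - y := by
    ext i j
    rcases eq_or_ne i j with rfl | hij
    · simp [Matrix.charmatrix_apply_eq, hx, hy]
    · simp [Matrix.charmatrix_apply_ne _ _ _ hij, hx, hy, Matrix.one_apply_ne hij]
  have hcomm : Commute x y := by
    show x * y = y * x
    simp [hx, smul_mul_assoc, mul_smul_comm]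
  have h1 : B * (x - y) = A.charpoly • (1 : Matrix V V ℚ[X]) := by
    rw [← hN, hB, Matrix.adjugate_mul]; rfl
  have key : B * (x ^ (d + 1) - y ^ (d + 1)) =
      A.charpoly • ∑ i ∈ Finset.range (d + 1), x ^ i * y ^ (d + 1 - 1 - i) := by
    rw [← hcomm.mul_geom_sum₂ (d + 1), ← mul_assoc, h1, smul_mul_assoc, one_mul]
  have hEq := congrArg (fun (M : Matrix V V ℚ[X]) => M u' u) key
  -- compute the left-hand side
  have hxpow : x ^ (d + 1) = (X ^ (d + 1) : ℚ[X]) • 1 := by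
    rw [hx, _root_.smul_pow, one_pow]
  have hypow : ∀ m, y ^ m = (C : ℚ →+* ℚ[X]).mapMatrix (A ^ m) := fun m => by
    rw [hy, map_pow]
  have hLx : (B * x ^ (d + 1)) u' u = 0 := by
    rw [hxpow, mul_smul_comm, mul_one, Matrix.smul_apply, hq, smul_zero]
  have hLy : (B * y ^ (d + 1)) u' u = ∑ w : V, B u' w * C ((A ^ (d + 1)) w u) := by
    rw [hypow, Matrix.mul_apply]
    rfl
  -- compute the right-hand side
  have hS : (∑ i ∈ Finset.range (d + 1), x ^ i * y ^ (d + 1 - 1 - i)) u' u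
      = C ((A ^ d) u' u) := by
    rw [Matrix.sum_apply]
    rw [Finset.sum_eq_single 0]
    · have : x ^ 0 * y ^ (d + 1 - 1 - 0) = y ^ d := by
        simp
      rw [this, hypow]
      rfl
    · intro i hi hi0
      have hilt : i < d + 1 := Finset.mem_range.mp hi
      have : (x ^ i * y ^ (d + 1 - 1 - i)) u' u
          = X ^ i * C ((A ^ (d + 1 - 1 - i)) u' u) := by
        rw [hx, _root_.smul_pow, one_pow, smul_mul_assoc, one_mul, hypow, Matrix.smul_apply]
        rfl
      rw [this, hk (d + 1 - 1 - i) (by omega), map_zero, mul_zero]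
    · intro h
      exact absurd (Finset.mem_range.mpr (by omega)) h
  rw [mul_sub, Matrix.sub_apply, hLx, hLy, Matrix.smul_apply, hS, zero_sub, smul_eq_mul] at hEq
  -- degree comparison
  have hdegL : (∑ w : V, B u' w * C ((A ^ (d + 1)) w u)).natDegree ≤ n - 1 := by
    apply Polynomial.natDegree_sum_le_of_forall_le
    intro w _
    refine (Polynomial.natDegree_mul_le).trans ?_
    rw [Polynomial.natDegree_C, add_zero]
    exact natDegree_adjugate_charmatrix_le A u' w
  have hmonic := A.charpoly_monic
  have hdegR : (A.charpoly * C ((A ^ d) u' u)).natDegree = n := by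
    rw [Polynomial.natDegree_mul hmonic.ne_zero (by simpa using hc),
      Polynomial.natDegree_C, add_zero, Matrix.charpoly_natDegree_eq_dim]
  have hne : (1 : ℕ) ≤ n := by
    have : Nonempty V := ⟨u⟩
    have := Fintype.card_pos (α := V)
    omega
  have : n ≤ n - 1 := by
    calc n = (A.charpoly * C ((A ^ d) u' u)).natDegree := hdegR.symm
      _ = (-(∑ w : V, B u' w * C ((A ^ (d + 1)) w u))).natDegree := by rw [hEq]
      _ = (∑ w : V, B u' w * C ((A ^ (d + 1)) w u)).natDegree := Polynomial.natDegree_neg _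
      _ ≤ n - 1 := hdegL
  omega

theorem stmt15 {V F : Type*} [Fintype V] [DecidableEq V] [Field F] [CharZero F]
    (D : SimpleGraph V) [DecidableRel D.Adj] (hconn : D.Connected)
    (hcard : 1 < Fintype.card V) (l : F)
    (hnotev : ¬ ∃ f : V → F, f ≠ 0 ∧ Matrix.mulVec (D.adjMatrix F) f = l • f)
    (hprop : ∃ (u u' : V) (f : V → F), IsPropagator D l u f ∧ f u' = 0) :
    ∃ p : Polynomial ℚ, p ≠ 0 ∧ p.natDegree < Fintype.card V ∧ Polynomial.aeval l p = 0 := by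
  obtain ⟨u, u', f, hf, hfu'⟩ := hprop
  set q : Polynomial ℚ := Matrix.adjugate (Matrix.charmatrix (D.adjMatrix ℚ)) u' u with hqdef
  refine ⟨q, adjugate_charmatrix_ne_zero D hconn u' u, ?_, ?_⟩
  · have h1 := natDegree_adjugate_charmatrix_le (D.adjMatrix ℚ) u' u
    rw [← hqdef] at h1
    omega
  · -- evaluate: aeval l q = adjugate (l • 1 - adjMatrix F) u' u = 0
    set M : Matrix V V F := l • 1 - D.adjMatrix F with hM
    set φ : Polynomial ℚ →ₐ[ℚ] F := Polynomial.aeval l with hφ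
    have hmap : φ.mapMatrix (Matrix.charmatrix (D.adjMatrix ℚ)) = M := by
      ext i j
      rcases eq_or_ne i j with rfl | hij
      · simp [Matrix.charmatrix_apply_eq, hM, hφ, SimpleGraph.adjMatrix_apply, apply_ite]
      · simp [Matrix.charmatrix_apply_ne _ _ _ hij, hM, hφ, Matrix.one_apply_ne hij,
          SimpleGraph.adjMatrix_apply, apply_ite]
    have hadj : Polynomial.aeval l q = Matrix.adjugate M u' u := by
      have := φ.map_adjugate (Matrix.charmatrix (D.adjMatrix ℚ))
      rw [hmap] at this
      have h2 := congrArg (fun (N : Matrix V V F) => N u' u) this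
      simpa [hφ] using h2
    rw [hadj]
    -- the propagator equation
    have hMf : M.mulVec f = fun w => -(if w = u then 1 else 0) := by
      funext w
      have hprop := hf w
      rw [hM, Matrix.sub_mulVec, Matrix.smul_mulVec, Matrix.one_mulVec]
      have : (D.adjMatrix F).mulVec f w = adjOp D f w := by
        rw [SimpleGraph.adjMatrix_mulVec_apply]; rfl
      simp only [Pi.sub_apply, Pi.smul_apply, smul_eq_mul, this]
      linear_combination -hprop
    have hfin : (Matrix.adjugate M).mulVec (M.mulVec f) = M.det • f := by
      rw [Matrix.mulVec_mulVec, Matrix.adjugate_mul, Matrix.smul_mulVec,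
        Matrix.one_mulVec]
    have h3 := congrFun hfin u'
    rw [hMf] at h3
    have hLHS : (Matrix.adjugate M).mulVec (fun w => -(if w = u then 1 else 0)) u'
        = -(Matrix.adjugate M u' u) := by
      simp [Matrix.mulVec, dotProduct, mul_ite, Finset.sum_ite_eq']
    rw [hLHS] at h3
    have : -(Matrix.adjugate M u' u) = 0 := by
      rw [h3]; simp [hfu']
    exact neg_eq_zero.mp this
end

section
/- Let Γ be a locally finite simple graph, F a field, λ ∈ F and v a vertex of Γ. If X₀ is the support of some eigenfunction of A_{Γ,F} corresponding to λ with v ∈ X₀, then there exists a set X ⊆ X₀ with v ∈ X such that X is the support of some eigenfunction of A_{Γ,F} corresponding to λ and X is minimal with this property: no proper subset of X containing v is the support of an eigenfunction of A_{Γ,F} corresponding to λ. -/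
open Function

/-- Finitely solvable systems of finitary linear equations over `F^V` are solvable. -/
lemma key_solvable {V F : Type*} [Field F] (S : Set ((V →₀ F) × F))
    (h : ∀ T : Finset ((V →₀ F) × F), ↑T ⊆ S →
      ∃ g : V → F, ∀ p ∈ T, Finsupp.linearCombination F g p.1 = p.2) :
    ∃ g : V → F, ∀ p ∈ S, Finsupp.linearCombination F g p.1 = p.2 := by
  classical
  set u : (S →₀ F) →ₗ[F] (V →₀ F) :=
    Finsupp.linearCombination F (fun s : S => (s : (V →₀ F) × F).1) with hu
  set cm : (S →₀ F) →ₗ[F] F :=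
    Finsupp.linearCombination F (fun s : S => (s : (V →₀ F) × F).2) with hcm
  have hker : LinearMap.ker u ≤ LinearMap.ker cm := by
    intro x hx
    obtain ⟨g, hg⟩ := h (x.support.image (fun s : S => (s : (V →₀ F) × F)))
      (by intro p hp; simp only [Finset.coe_image] at hp
          obtain ⟨s, _, rfl⟩ := hp; exact s.2)
    have hx0 : u x = 0 := hx
    have e1 : Finsupp.linearCombination F g (u x)
        = x.sum fun s a => a • Finsupp.linearCombination F g (s : (V →₀ F) × F).1 := by
      have hux : u x = x.sum fun s a => a • ((s : (V →₀ F) × F).1) := rfl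
      rw [hux, map_finsuppSum]
      exact Finsupp.sum_congr fun s _ => map_smul _ _ _
    have e2 : cm x = x.sum fun s a => a • ((s : (V →₀ F) × F).2) := rfl
    have : Finsupp.linearCombination F g (u x) = cm x := by
      rw [e1, e2]
      exact Finsupp.sum_congr fun s hs => by rw [hg _ (Finset.mem_image_of_mem _ hs)]
    rw [hx0, map_zero] at this
    exact LinearMap.mem_ker.2 this.symm
  let ψ : LinearMap.range u →ₗ[F] F :=
    (Submodule.liftQ (LinearMap.ker u) cm hker).comp
      (LinearMap.quotKerEquivRange u).symm.toLinearMap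
  obtain ⟨Ψ, hΨ⟩ := LinearMap.exists_extend ψ
  have hΨu : ∀ x : S →₀ F, Ψ (u x) = cm x := by
    intro x
    have h1 : Ψ (u x) = ψ ⟨u x, LinearMap.mem_range_self u x⟩ := by
      have := congrArg (fun f : LinearMap.range u →ₗ[F] F =>
        f ⟨u x, LinearMap.mem_range_self u x⟩) hΨ
      simpa using this
    rw [h1]
    show Submodule.liftQ (LinearMap.ker u) cm hker
        ((LinearMap.quotKerEquivRange u).symm ⟨u x, LinearMap.mem_range_self u x⟩) = cm x
    have h2 : (LinearMap.quotKerEquivRange u).symm ⟨u x, LinearMap.mem_range_self u x⟩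
        = Submodule.Quotient.mk x := by
      rw [LinearEquiv.symm_apply_eq]
      exact Subtype.ext (LinearMap.quotKerEquivRange_apply_mk u x).symm
    rw [h2, Submodule.liftQ_apply]
  refine ⟨fun w => Ψ (Finsupp.single w 1), fun p hp => ?_⟩
  have hid : ∀ φ : V →₀ F, Finsupp.linearCombination F (fun w => Finsupp.single w (1:F)) φ = φ := by
    intro φ
    rw [Finsupp.linearCombination_apply]
    conv_rhs => rw [← Finsupp.sum_single φ]
    exact Finsupp.sum_congr fun w _ => by rw [Finsupp.smul_single, smul_eq_mul, mul_one]
  have h1 : Finsupp.linearCombination F (fun w => Ψ (Finsupp.single w 1)) p.1 = Ψ p.1 := by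
    have := Finsupp.apply_linearCombination F Ψ (fun w => Finsupp.single w (1:F)) p.1
    rw [hid p.1] at this
    exact this.symm
  have h2 : u (Finsupp.single (⟨p, hp⟩ : S) 1) = p.1 := by
    rw [hu, Finsupp.linearCombination_single, one_smul]
  have h3 : cm (Finsupp.single (⟨p, hp⟩ : S) 1) = p.2 := by
    rw [hcm, Finsupp.linearCombination_single, one_smul]
  rw [h1, ← h2, hΨu, h3]

section Aux

variable {V F : Type*} (G : SimpleGraph V) [G.LocallyFinite] [Field F]

lemma lc_single (g : V → F) (u : V) :
    Finsupp.linearCombination F g (Finsupp.single u 1) = g u := by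
  rw [Finsupp.linearCombination_single, one_smul]

/-- The eigenvalue-equation functional at `w`. -/
noncomputable def eigFl (l : F) (w : V) : V →₀ F :=
  (∑ u ∈ G.neighborFinset w, Finsupp.single u (1:F)) - l • Finsupp.single w 1

lemma lc_eigFl (l : F) (g : V → F) (w : V) :
    Finsupp.linearCombination F g (eigFl G l w) = adjOp G g w - l * g w := by
  rw [eigFl, map_sub, map_smul, map_sum]
  simp only [lc_single, smul_eq_mul, adjOp]

lemma adjOp_smul (a : F) (g : V → F) (w : V) : adjOp G (a • g) w = a * adjOp G g w := by
  simp [adjOp, Finset.mul_sum]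

end Aux

lemma IsEigenfun.smul {V F : Type*} {G : SimpleGraph V} [G.LocallyFinite] [Field F]
    {l : F} {g : V → F} (hg : IsEigenfun G l g)
    {a : F} (ha : a ≠ 0) : IsEigenfun G l (a • g) := by
  refine ⟨smul_ne_zero ha hg.1, fun w => ?_⟩
  rw [adjOp_smul, hg.2 w]
  simp [mul_left_comm, mul_comm]

theorem stmt16 {V F : Type*} (G : SimpleGraph V) [G.LocallyFinite] [Field F]
    (l : F) (v : V) (f₀ : V → F) (hf₀ : IsEigenfun G l f₀) (hv : v ∈ support f₀) :
    ∃ X : Set V, X ⊆ support f₀ ∧ v ∈ X ∧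
      (∃ g : V → F, IsEigenfun G l g ∧ support g = X) ∧
      ∀ Y : Set V, Y ⊆ X → Y ≠ X → v ∈ Y →
        ¬ ∃ g : V → F, IsEigenfun G l g ∧ support g = Y := by
  classical
  set S0 : Set (Set V) :=
    {X | X ⊆ support f₀ ∧ v ∈ X ∧ ∃ g : V → F, IsEigenfun G l g ∧ support g = X} with hS0
  have hX0 : support f₀ ∈ S0 := ⟨subset_rfl, hv, f₀, hf₀, rfl⟩
  have hzorn : ∀ c ⊆ S0, IsChain (· ⊆ ·) c → c.Nonempty → ∃ lb ∈ S0, ∀ s ∈ c, lb ⊆ s := by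
    intro c hc hchain hne
    have hnorm : ∀ X ∈ c, ∃ g : V → F, IsEigenfun G l g ∧ support g = X ∧ g v = 1 := by
      intro X hX
      obtain ⟨_, hvX, g, hg, hsupp⟩ := hc hX
      have hgv : g v ≠ 0 := by rw [← Function.mem_support, hsupp]; exact hvX
      refine ⟨(g v)⁻¹ • g, hg.smul (inv_ne_zero hgv), ?_, by simp [inv_mul_cancel₀ hgv]⟩
      rw [support_const_smul_of_ne_zero _ _ (inv_ne_zero hgv), hsupp]
    set S : Set ((V →₀ F) × F) :=
      {p | (∃ w, p = (eigFl G l w, 0)) ∨ p = (Finsupp.single v 1, 1) ∨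
        ∃ X ∈ c, ∃ u, u ∉ X ∧ p = (Finsupp.single u 1, 0)} with hS
    have claim : ∀ T : Finset ((V →₀ F) × F), ↑T ⊆ S → ∃ X ∈ c,
        ∀ g : V → F, IsEigenfun G l g → support g ⊆ X → g v = 1 →
          ∀ p ∈ T, Finsupp.linearCombination F g p.1 = p.2 := by
      intro T
      induction T using Finset.induction_on with
      | empty =>
        intro _
        obtain ⟨X, hX⟩ := hne
        exact ⟨X, hX, fun g _ _ _ p hp => absurd hp (Finset.notMem_empty p)⟩
      | @insert p T hpT ih =>
        intro hsub
        have hTsub : ↑T ⊆ S := fun q hq => hsub (by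
          rw [Finset.coe_insert]; exact Set.mem_insert_of_mem _ hq)
        obtain ⟨X, hXc, hX⟩ := ih hTsub
        have hpS : p ∈ S := hsub (by rw [Finset.coe_insert]; exact Set.mem_insert _ _)
        rcases hpS with ⟨w, rfl⟩ | rfl | ⟨X', hX'c, u, huX', rfl⟩
        · refine ⟨X, hXc, fun g hg hgs hgv q hq => ?_⟩
          rcases Finset.mem_insert.1 hq with rfl | hq
          · rw [lc_eigFl, hg.2 w, sub_self]
          · exact hX g hg hgs hgv q hq
        · refine ⟨X, hXc, fun g hg hgs hgv q hq => ?_⟩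
          rcases Finset.mem_insert.1 hq with rfl | hq
          · rw [lc_single, hgv]
          · exact hX g hg hgs hgv q hq
        · have : ∃ X'' ∈ c, X'' ⊆ X ∧ X'' ⊆ X' := by
            rcases eq_or_ne X X' with rfl | hne'
            · exact ⟨X, hXc, subset_rfl, subset_rfl⟩
            · rcases hchain hXc hX'c hne' with h | h
              · exact ⟨X, hXc, subset_rfl, h⟩
              · exact ⟨X', hX'c, h, subset_rfl⟩
          obtain ⟨X'', hX''c, h1, h2⟩ := this
          refine ⟨X'', hX''c, fun g hg hgs hgv q hq => ?_⟩
          rcases Finset.mem_insert.1 hq with rfl | hq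
          · rw [lc_single]
            have : u ∉ support g := fun hu => huX' (h2 (hgs hu))
            simpa [Function.mem_support, not_not] using this
          · exact hX g hg (hgs.trans h1) hgv q hq
    obtain ⟨g, hg⟩ := key_solvable S (by
      intro T hT
      obtain ⟨X, hXc, hX⟩ := claim T hT
      obtain ⟨gX, hgX, hsupp, hgXv⟩ := hnorm X hXc
      exact ⟨gX, hX gX hgX hsupp.subset hgXv⟩)
    have hgeig : ∀ w, adjOp G g w = l * g w := by
      intro w
      have := hg (eigFl G l w, 0) (Or.inl ⟨w, rfl⟩)
      rw [lc_eigFl] at this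
      exact sub_eq_zero.1 this
    have hgv : g v = 1 := by
      have := hg (Finsupp.single v 1, 1) (Or.inr (Or.inl rfl))
      rwa [lc_single] at this
    have hgsub : ∀ X ∈ c, support g ⊆ X := by
      intro X hX w hw
      by_contra hwX
      have := hg (Finsupp.single w 1, 0) (Or.inr (Or.inr ⟨X, hX, w, hwX, rfl⟩))
      rw [lc_single] at this
      exact hw this
    have hgne : IsEigenfun G l g :=
      ⟨fun h0 => by simp [h0] at hgv, hgeig⟩
    obtain ⟨X₁, hX₁⟩ := hne
    refine ⟨support g, ⟨(hgsub X₁ hX₁).trans (hc hX₁).1, ?_, g, hgne, rfl⟩, hgsub⟩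
    rw [Function.mem_support, hgv]
    exact one_ne_zero
  obtain ⟨m, hmx, hmin⟩ := zorn_superset_nonempty S0 hzorn _ hX0
  obtain ⟨hm1, hm2, hm3⟩ := hmin.prop
  refine ⟨m, hm1, hm2, hm3, ?_⟩
  rintro Y hYm hYne hvY ⟨g, hgeig, hgsupp⟩
  have hY : Y ∈ S0 := ⟨hYm.trans hm1, hvY, g, hgeig, hgsupp⟩
  exact hYne (le_antisymm hYm (hmin.2 hY hYm))
end

section
/- Let Γ be a locally finite simple graph, F a field, λ ∈ F and v a vertex of Γ. Suppose X ⊆ V(Γ) contains v, X is the support of some eigenfunction of A_{Γ,F} corresponding to λ, and X is minimal by inclusion among supports (containing v) of eigenfunctions of A_{Γ,F} corresponding to λ. Then X is Γ²-connected. -/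
open Function

/-- The graph `Γ²` on the same vertex set as `G`, in which two distinct vertices are
adjacent exactly when they are joined in `G` by a walk of length at most `2`. -/
def squareGraph {V : Type*} (G : SimpleGraph V) : SimpleGraph V where
  Adj u w := u ≠ w ∧ (G.Adj u w ∨ ∃ z, G.Adj u z ∧ G.Adj z w)
  symm := ⟨by
    rintro u w ⟨h, h'⟩
    refine ⟨h.symm, ?_⟩
    rcases h' with h' | ⟨z, h1, h2⟩
    · exact Or.inl h'.symm
    · exact Or.inr ⟨z, h2.symm, h1.symm⟩⟩
  loopless := ⟨fun u h => h.1 rfl⟩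

theorem stmt17 {V F : Type*} (G : SimpleGraph V) [G.LocallyFinite] [Field F]
    (l : F) (v : V) (X : Set V) (hvX : v ∈ X)
    (hsupp : ∃ f : V → F, IsEigenfun G l f ∧ support f = X)
    (hmin : ∀ g : V → F, IsEigenfun G l g → v ∈ support g → support g ⊆ X →
      support g = X) :
    ((squareGraph G).induce X).Connected := by
  classical
  obtain ⟨f, ⟨hf0, hfeig⟩, hsuppf⟩ := hsupp
  set Y : Set V :=
    {w | ∃ h : w ∈ X, ((squareGraph G).induce X).Reachable ⟨v, hvX⟩ ⟨w, h⟩} with hY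
  have hvY : v ∈ Y := ⟨hvX, SimpleGraph.Reachable.refl _⟩
  have hYX : Y ⊆ X := fun w hw => hw.1
  have hG2 : ∀ {a b : V}, G.Adj a b → (squareGraph G).Adj a b :=
    fun h => ⟨h.ne, Or.inl h⟩
  have hclos : ∀ w ∈ Y, ∀ u, u ∈ X → (squareGraph G).Adj w u → u ∈ Y := by
    rintro w ⟨hwX, hreach⟩ u huX hadj
    exact ⟨huX, hreach.trans (SimpleGraph.Adj.reachable
      (show ((squareGraph G).induce X).Adj ⟨w, hwX⟩ ⟨u, huX⟩ from hadj))⟩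
  set g : V → F := fun w => if w ∈ Y then f w else 0 with hg
  have hsg : support g = Y := by
    ext w
    simp only [mem_support, hg]
    constructor
    · intro h
      by_contra hw
      simp [hw] at h
    · intro hw
      have : w ∈ support f := hsuppf ▸ hYX hw
      simpa [hw] using this
  have hgeig : ∀ w, adjOp G g w = l * g w := by
    intro w
    by_cases hwY : w ∈ Y
    · have hcong : ∀ u ∈ G.neighborFinset w, g u = f u := by
        intro u hu
        rw [SimpleGraph.mem_neighborFinset] at hu
        by_cases hufz : f u = 0
        · simp [hg, hufz]
        · have huX : u ∈ X := hsuppf ▸ Function.mem_support.mpr hufz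
          have huY : u ∈ Y := hclos w hwY u huX (hG2 hu)
          simp [hg, huY]
      rw [adjOp, Finset.sum_congr rfl hcong, ← adjOp, hfeig w]
      simp [hg, hwY]
    · have hg0 : g w = 0 := by simp [hg, hwY]
      rw [hg0, mul_zero, adjOp]
      by_cases hex : ∃ u, G.Adj w u ∧ u ∈ Y
      · obtain ⟨u0, hadj0, hu0Y⟩ := hex
        have hwX : w ∉ X := by
          intro hwX
          exact hwY (hclos u0 hu0Y w hwX (hG2 hadj0).symm)
        have hall : ∀ u ∈ G.neighborFinset w, g u = f u := by
          intro u hu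
          rw [SimpleGraph.mem_neighborFinset] at hu
          by_cases hufz : f u = 0
          · simp [hg, hufz]
          · have huX : u ∈ X := hsuppf ▸ Function.mem_support.mpr hufz
            have huY : u ∈ Y := by
              by_cases h : u = u0
              · exact h ▸ hu0Y
              · exact hclos u0 hu0Y u huX ⟨Ne.symm h, Or.inr ⟨w, hadj0.symm, hu⟩⟩
            simp [hg, huY]
        rw [Finset.sum_congr rfl hall, ← adjOp, hfeig w]
        have hfw : f w = 0 := by
          by_contra h
          exact hwX (hsuppf ▸ Function.mem_support.mpr h)
        simp [hfw]
      · push_neg at hex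
        apply Finset.sum_eq_zero
        intro u hu
        rw [SimpleGraph.mem_neighborFinset] at hu
        simp [hg, hex u hu]
  have hgne : g ≠ 0 := by
    intro h
    have hv : v ∈ support g := hsg ▸ hvY
    rw [h] at hv
    simp at hv
  have hvsg : v ∈ support g := hsg ▸ hvY
  have hXY : Y = X := by
    have := hmin g ⟨hgne, hgeig⟩ hvsg (hsg ▸ hYX)
    rw [hsg] at this
    exact this
  have : Nonempty X := ⟨⟨v, hvX⟩⟩
  refine ⟨fun a b => ?_⟩
  obtain ⟨wa, ha⟩ := a
  obtain ⟨wb, hb⟩ := b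
  have hwa : wa ∈ Y := hXY ▸ ha
  have hwb : wb ∈ Y := hXY ▸ hb
  obtain ⟨ha', hra⟩ := hwa
  obtain ⟨hb', hrb⟩ := hwb
  exact hra.symm.trans hrb
end
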